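/- arXiv:math/0601641 — 8 statements merged into one kernel-verified Lean document; each statement's English description precedes it below -/
import Mathlib

section
/- Let A ⊂ ℝⁿ be a compact set, let τ : ℝⁿ → ℝ^m and q : ℝⁿ → ℝ be continuous maps, and suppose there is a class-K function ρ such that |q(z₁) − q(z₂)| ≤ ρ(‖τ(z₁) − τ(z₂)‖) for all z₁, z₂ ∈ A. Then there exists a continuous map γ : ℝ^m → ℝ such that q(z) + γ(τ(z)) = 0 for all z ∈ A. -/
open Set Filter Topology Metric MeasureTheory

noncomputable section

/-- A global (forward-complete) solution of the ODE `ẋ = F x` on `[0, ∞)`. -/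
def IsGlobalSol {E : Type*} [NormedAddCommGroup E] [NormedSpace ℝ E]
    (F : E → E) (p : ℝ → E) : Prop :=
  ∀ t : ℝ, 0 ≤ t → HasDerivAt p (F (p t)) t

/-- The compact set `B` is asymptotically stable for `ẋ = F x` with domain of attraction
the open set `D ⊇ B`: (i) uniform stability (solutions starting close to `B` exist globally
and stay close), (ii) every solution starting in `D` exists globally and converges to `B`. -/
def IsAsympStable {E : Type*} [NormedAddCommGroup E] [NormedSpace ℝ E]
    (F : E → E) (B D : Set E) : Prop :=
  IsCompact B ∧ IsOpen D ∧ B ⊆ D ∧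
  (∀ ε > (0:ℝ), ∃ δ > (0:ℝ),
    (∀ x₀ : E, infDist x₀ B ≤ δ → ∃ p : ℝ → E, IsGlobalSol F p ∧ p 0 = x₀) ∧
    ∀ p : ℝ → E, IsGlobalSol F p → infDist (p 0) B ≤ δ →
      ∀ t : ℝ, 0 ≤ t → infDist (p t) B ≤ ε) ∧
  (∀ x₀ ∈ D, ∃ p : ℝ → E, IsGlobalSol F p ∧ p 0 = x₀) ∧
  ∀ p : ℝ → E, IsGlobalSol F p → p 0 ∈ D →
    Tendsto (fun t => infDist (p t) B) atTop (nhds 0)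

/-- The compact set `B` is in addition locally exponentially stable for `ẋ = F x`. -/
def IsLocExpStable {E : Type*} [NormedAddCommGroup E] [NormedSpace ℝ E]
    (F : E → E) (B : Set E) : Prop :=
  ∃ M : ℝ, 1 ≤ M ∧ ∃ lam > (0:ℝ), ∃ c₀ > (0:ℝ),
    ∀ p : ℝ → E, IsGlobalSol F p → infDist (p 0) B ≤ c₀ →
      ∀ t : ℝ, 0 ≤ t → infDist (p t) B ≤ M * Real.exp (-lam * t) * infDist (p 0) B

/-- A class-`K` function `[0,∞) → [0,∞)`: continuous, strictly increasing, vanishing at `0`. -/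
def IsClassK (ρ : ℝ → ℝ) : Prop :=
  ContinuousOn ρ (Ici 0) ∧ StrictMonoOn ρ (Ici 0) ∧ ρ 0 = 0

/-- A class-`K∞` function. -/
def IsClassKInf (ρ : ℝ → ℝ) : Prop :=
  IsClassK ρ ∧ Tendsto ρ atTop atTop

/-- A class-`KL` function. -/
def IsClassKL (β : ℝ → ℝ → ℝ) : Prop :=
  (∀ t : ℝ, 0 ≤ t → IsClassK fun s => β s t) ∧
  ∀ s : ℝ, 0 ≤ s → AntitoneOn (fun t => β s t) (Ici 0) ∧
    Tendsto (fun t => β s t) atTop (nhds 0)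

/-- `F` is Hurwitz: `‖exp (t F)‖ ≤ c e^{-λ t}` for all `t ≥ 0`, for some `c ≥ 1`, `λ > 0`. -/
def IsHurwitz {m : ℕ} (F : Matrix (Fin m) (Fin m) ℝ) : Prop :=
  ∃ c : ℝ, 1 ≤ c ∧ ∃ lam > (0:ℝ), ∀ t : ℝ, 0 ≤ t →
    ∀ x : Fin m → ℝ, ‖(NormedSpace.exp (t • F)).mulVec x‖ ≤ c * Real.exp (-lam * t) * ‖x‖

/-- `(F, G)` is a controllable pair: `G, FG, …, F^{m-1}G` span `ℝ^m`. -/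
def IsControllablePair {m : ℕ} (F : Matrix (Fin m) (Fin m) ℝ) (G : Fin m → ℝ) : Prop :=
  Submodule.span ℝ (Set.range fun i : Fin m => (F ^ (i : ℕ)).mulVec G) = ⊤

open Classical in
/-- The weighted distance `|p|_{B/D} = (1 + 1/dist(p, ∂ cl D)) · dist(p, B)`
(with the convention `|p|_{B/D} = dist(p,B)` when `D` is the whole space). -/
def relDist {E : Type*} [NormedAddCommGroup E] (B D : Set E) (p : E) : ℝ :=
  if D = univ then infDist p B
  else (1 + 1 / infDist p (frontier (closure D))) * infDist p B

/-- Proposition 3, first claim: under the class-`K` partial injectivity bound on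
the compact set `A`, there is a continuous `γ : ℝᵐ → ℝ` with `q(z) + γ(τ(z)) = 0` on `A`. -/
theorem statement_6
    (n m : ℕ) (A : Set (Fin n → ℝ)) (hA : IsCompact A)
    (τ : (Fin n → ℝ) → (Fin m → ℝ)) (q : (Fin n → ℝ) → ℝ)
    (hτ : Continuous τ) (hq : Continuous q)
    (ρ : ℝ → ℝ) (hρ : IsClassK ρ)
    (hinj : ∀ z₁ ∈ A, ∀ z₂ ∈ A, |q z₁ - q z₂| ≤ ρ ‖τ z₁ - τ z₂‖) :
    ∃ γ : (Fin m → ℝ) → ℝ, Continuous γ ∧ ∀ z ∈ A, q z + γ (τ z) = 0 := by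
  classical
  set K : Set (Fin m → ℝ) := τ '' A with hK
  have hKc : IsCompact K := hA.image hτ
  have hchoice : ∀ x : K, ∃ z, z ∈ A ∧ τ z = (x : Fin m → ℝ) := fun x => x.2
  set z : K → (Fin n → ℝ) := fun x => (hchoice x).choose with hz
  have hzA : ∀ x : K, z x ∈ A := fun x => (hchoice x).choose_spec.1
  have hzτ : ∀ x : K, τ (z x) = (x : Fin m → ℝ) := fun x => (hchoice x).choose_spec.2
  -- well-definedness
  have hwd : ∀ z₁ ∈ A, ∀ z₂ ∈ A, τ z₁ = τ z₂ → q z₁ = q z₂ := by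
    intro z₁ h₁ z₂ h₂ he
    have h := hinj z₁ h₁ z₂ h₂
    rw [he, sub_self, norm_zero, hρ.2.2] at h
    have := abs_nonpos_iff.mp h
    linarith [sub_eq_zero.mp this]
  -- smallness of ρ near 0
  have hρ0 : ∀ ε > (0:ℝ), ∃ δ > (0:ℝ), ∀ s : ℝ, 0 ≤ s → s < δ → ρ s < ε := by
    intro ε hε
    have hc : ContinuousWithinAt ρ (Ici 0) 0 := hρ.1 0 (by simp)
    rw [Metric.continuousWithinAt_iff] at hc
    obtain ⟨δ, hδ, hδ'⟩ := hc ε hε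
    refine ⟨δ, hδ, fun s hs hsδ => ?_⟩
    have := hδ' (x := s) hs (by simpa [Real.dist_eq, abs_of_nonneg hs] using hsδ)
    rw [hρ.2.2, Real.dist_eq, sub_zero] at this
    exact lt_of_le_of_lt (le_abs_self _) this
  -- continuity of the function on K
  have hgc : Continuous (fun x : K => -q (z x)) := by
    rw [Metric.continuous_iff]
    intro x ε hε
    obtain ⟨δ, hδ, hδ'⟩ := hρ0 ε hε
    refine ⟨δ, hδ, fun y hy => ?_⟩
    have hb := hinj (z y) (hzA y) (z x) (hzA x)
    rw [hzτ, hzτ] at hb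
    have hdist : ‖(y : Fin m → ℝ) - (x : Fin m → ℝ)‖ = dist y x := by
      rw [Subtype.dist_eq, dist_eq_norm]
    rw [hdist] at hb
    have hρlt : ρ (dist y x) < ε := hδ' _ dist_nonneg hy
    calc dist (-q (z y)) (-q (z x)) = |q (z y) - q (z x)| := by
          rw [Real.dist_eq]; rw [neg_sub_neg, abs_sub_comm]
      _ < ε := lt_of_le_of_lt hb hρlt
  -- Tietze extension
  obtain ⟨γC, hγC⟩ := ContinuousMap.exists_restrict_eq (Y := ℝ) hKc.isClosed
    ⟨fun x : K => -q (z x), hgc⟩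
  refine ⟨γC, γC.continuous, fun w hw => ?_⟩
  have hwK : τ w ∈ K := mem_image_of_mem τ hw
  have := congrFun (congrArg DFunLike.coe hγC) ⟨τ w, hwK⟩
  simp only [ContinuousMap.restrict_apply, ContinuousMap.coe_mk] at this
  rw [this]
  have : q (z ⟨τ w, hwK⟩) = q w := hwd _ (hzA _) _ hw (hzτ ⟨τ w, hwK⟩)
  rw [this]; ring
end
end

section
/- Let A ⊂ ℝⁿ be a compact set, let τ : ℝⁿ → ℝ^m and q : ℝⁿ → ℝ be continuous maps, and suppose there is a class-K function ρ such that |q(z₁) − q(z₂)| ≤ ρ(‖τ(z₁) − τ(z₂)‖) for all z₁, z₂ ∈ A. If in addition ρ is linearly bounded at the origin, i.e. there are L > 0 and s₀ > 0 with ρ(s) ≤ L s for all s ∈ [0, s₀], then there exists a (globally) Lipschitz map γ : ℝ^m → ℝ such that q(z) + γ(τ(z)) = 0 for all z ∈ A. -/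
open Set Filter Topology Metric MeasureTheory

noncomputable section

/-- Proposition 3, second claim: if in addition the class-`K` function `ρ` is
linearly bounded at the origin, then `γ` can be chosen globally Lipschitz. -/
theorem statement_7
    (n m : ℕ) (A : Set (Fin n → ℝ)) (hA : IsCompact A)
    (τ : (Fin n → ℝ) → (Fin m → ℝ)) (q : (Fin n → ℝ) → ℝ)
    (hτ : Continuous τ) (hq : Continuous q)
    (ρ : ℝ → ℝ) (hρ : IsClassK ρ)
    (hinj : ∀ z₁ ∈ A, ∀ z₂ ∈ A, |q z₁ - q z₂| ≤ ρ ‖τ z₁ - τ z₂‖)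
    (hlin : ∃ L > (0:ℝ), ∃ s₀ > (0:ℝ), ∀ s ∈ Icc 0 s₀, ρ s ≤ L * s) :
    ∃ γ : (Fin m → ℝ) → ℝ, (∃ Kγ : NNReal, LipschitzWith Kγ γ) ∧
      ∀ z ∈ A, q z + γ (τ z) = 0 := by
  classical
  obtain ⟨L, hL, s₀, hs₀, hLs⟩ := hlin
  obtain ⟨C, hC⟩ : ∃ C, ∀ z ∈ A, ‖q z‖ ≤ C :=
    hA.exists_bound_of_continuousOn hq.continuousOn
  rcases A.eq_empty_or_nonempty with hAe | ⟨z₀, hz₀⟩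
  · exact ⟨0, ⟨0, LipschitzWith.const 0⟩, fun z hz => absurd hz (by simp [hAe])⟩
  have hC0 : 0 ≤ C := le_trans (norm_nonneg _) (hC z₀ hz₀)
  set K : ℝ := max L ((2 * C + 1) / s₀) with hK
  have hK0 : 0 ≤ K := le_trans hL.le (le_max_left _ _)
  set f : (Fin m → ℝ) → ℝ := fun y =>
    if h : y ∈ τ '' A then -q h.choose else 0 with hf
  have hfval : ∀ z ∈ A, f (τ z) = -q z := by
    intro z hz
    have h : τ z ∈ τ '' A := mem_image_of_mem τ hz
    have hc := h.choose_spec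
    have hqeq : q h.choose = q z := by
      have := hinj h.choose hc.1 z hz
      rw [hc.2, sub_self, norm_zero, hρ.2.2] at this
      have : |q h.choose - q z| = 0 := le_antisymm this (abs_nonneg _)
      linarith [abs_eq_zero.mp this]
    simp only [hf, dif_pos h, hqeq]
  have hlip : LipschitzOnWith K.toNNReal f (τ '' A) := by
    rw [lipschitzOnWith_iff_dist_le_mul]
    intro y₁ h₁ y₂ h₂
    obtain ⟨z₁, hz₁, rfl⟩ := h₁
    obtain ⟨z₂, hz₂, rfl⟩ := h₂
    rw [hfval z₁ hz₁, hfval z₂ hz₂]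
    have hdist : dist (τ z₁) (τ z₂) = ‖τ z₁ - τ z₂‖ := dist_eq_norm _ _
    rw [Real.dist_eq, Real.coe_toNNReal _ hK0, neg_sub_neg]
    have habs : |q z₂ - q z₁| ≤ ρ ‖τ z₂ - τ z₁‖ := hinj z₂ hz₂ z₁ hz₁
    have hnorm : ‖τ z₂ - τ z₁‖ = ‖τ z₁ - τ z₂‖ := norm_sub_rev _ _
    rw [hnorm] at habs
    set d : ℝ := ‖τ z₁ - τ z₂‖ with hd
    have hd0 : 0 ≤ d := norm_nonneg _
    rw [hdist]
    rcases le_or_gt d s₀ with hds | hds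
    · calc |q z₂ - q z₁| ≤ ρ d := habs
        _ ≤ L * d := hLs d ⟨hd0, hds⟩
        _ ≤ K * d := by
          apply mul_le_mul_of_nonneg_right (le_max_left _ _) hd0
    · have h1 : |q z₂ - q z₁| ≤ 2 * C := by
        have := hC z₁ hz₁
        have := hC z₂ hz₂
        rw [Real.norm_eq_abs] at *
        calc |q z₂ - q z₁| ≤ |q z₂| + |q z₁| := abs_sub _ _
          _ ≤ 2 * C := by linarith
      have h2 : (2 * C + 1) / s₀ ≤ K := le_max_right _ _
      have h3 : 2 * C ≤ ((2 * C + 1) / s₀) * d := by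
        rw [div_mul_eq_mul_div, le_div_iff₀ hs₀]
        nlinarith
      calc |q z₂ - q z₁| ≤ 2 * C := h1
        _ ≤ ((2 * C + 1) / s₀) * d := h3
        _ ≤ K * d := mul_le_mul_of_nonneg_right h2 hd0
  obtain ⟨g, hg, hgeq⟩ := hlip.extend_real
  refine ⟨g, ⟨K.toNNReal, hg⟩, fun z hz => ?_⟩
  rw [← hgeq (mem_image_of_mem τ hz), hfval z hz]
  ring
end
end

section
/- Let f : ℝⁿ → ℝⁿ be continuously differentiable and bounded, with ‖Df(z)‖ ≤ ℓ (operator norm) for all z ∈ ℝⁿ, and let φ : ℝ × ℝⁿ → ℝⁿ be its complete flow. Let q : ℝⁿ → ℝ be continuously differentiable with q and Dq bounded, and let g be a nonzero real number. Then for every λ ∈ ℂ with Re λ < −ℓ, the map τ_λ : ℝⁿ → ℂ defined by τ_λ(z) = ∫_{−∞}^0 e^{−λ s} g q(φ(s,z)) ds is well defined (the integral converges absolutely) and continuously differentiable on ℝⁿ. -/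
open Set Filter Topology Metric MeasureTheory

noncomputable section

section aux12
open intervalIntegral

lemma key_int {X : Type*} [NormedAddCommGroup X] [NormedSpace ℝ X] [CompleteSpace X]
    (g : ℝ → X) (M : ℝ) (n : ℕ) (hg : Continuous g) (hM : 0 ≤ M)
    (hb : ∀ s, ‖g s‖ ≤ M * |s| ^ n) (t : ℝ) :
    ‖∫ s in (0:ℝ)..t, g s‖ ≤ M * |t| ^ (n+1) / (n+1) := by
  rcases le_or_gt 0 t with ht | ht
  · calc ‖∫ s in (0:ℝ)..t, g s‖ ≤ ∫ s in (0:ℝ)..t, ‖g s‖ :=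
          intervalIntegral.norm_integral_le_integral_norm ht
      _ ≤ ∫ s in (0:ℝ)..t, M * s ^ n := by
          apply intervalIntegral.integral_mono_on ht (hg.norm.intervalIntegrable _ _)
            ((continuous_const.mul (continuous_pow n)).intervalIntegrable _ _)
          intro s hs
          calc ‖g s‖ ≤ M * |s| ^ n := hb s
            _ = M * s ^ n := by rw [abs_of_nonneg hs.1]
      _ = M * t ^ (n+1) / (n+1) := by
          rw [intervalIntegral.integral_const_mul, integral_pow]
          ring
      _ = M * |t| ^ (n+1) / (n+1) := by rw [abs_of_nonneg ht]
  · rw [intervalIntegral.integral_symm, norm_neg]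
    calc ‖∫ s in t..(0:ℝ), g s‖ ≤ ∫ s in t..(0:ℝ), ‖g s‖ :=
          intervalIntegral.norm_integral_le_integral_norm ht.le
      _ ≤ ∫ s in t..(0:ℝ), M * (-s) ^ n := by
          apply intervalIntegral.integral_mono_on ht.le (hg.norm.intervalIntegrable _ _)
            ((continuous_const.mul ((continuous_pow n).comp continuous_neg)).intervalIntegrable _ _)
          intro s hs
          calc ‖g s‖ ≤ M * |s| ^ n := hb s
            _ = M * (-s) ^ n := by rw [abs_of_nonpos hs.2]
      _ = M * (-t) ^ (n+1) / (n+1) := by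
          rw [intervalIntegral.integral_comp_neg (fun s => M * s ^ n), neg_zero,
            intervalIntegral.integral_const_mul, integral_pow]
          ring
      _ = M * |t| ^ (n+1) / (n+1) := by rw [abs_of_neg ht]

lemma linear_ODE_exists {X : Type*} [NormedAddCommGroup X] [NormedSpace ℝ X] [CompleteSpace X]
    (B : ℝ → X →L[ℝ] X) (hB : Continuous B) {l : ℝ} (hl : 0 ≤ l)
    (hBl : ∀ t, ‖B t‖ ≤ l) (x₀ : X) :
    ∃ W : ℝ → X, W 0 = x₀ ∧ (∀ t, HasDerivAt W (B t (W t)) t) ∧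
      ∀ t, ‖W t‖ ≤ ‖x₀‖ * Real.exp (l * |t|) := by
  set I : ℕ → ℝ → X := fun n => Nat.rec (fun _ => x₀) (fun _ In t => ∫ s in (0:ℝ)..t, B s (In s)) n
    with hI
  have hIsucc : ∀ n t, I (n+1) t = ∫ s in (0:ℝ)..t, B s (I n s) := fun n t => rfl
  have hcont : ∀ n, Continuous (I n) := by
    intro n
    induction n with
    | zero => exact continuous_const
    | succ n ih =>
      rw [show I (n+1) = fun t => ∫ s in (0:ℝ)..t, B s (I n s) from rfl]
      exact intervalIntegral.continuous_primitive
        (fun a b => (hB.clm_apply ih).intervalIntegrable a b) 0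
  have hderiv : ∀ n t, HasDerivAt (I (n+1)) (B t (I n t)) t := by
    intro n t
    exact intervalIntegral.integral_hasDerivAt_right
      ((hB.clm_apply (hcont n)).intervalIntegrable _ _)
      ((hB.clm_apply (hcont n)).stronglyMeasurableAtFilter _ _)
      (hB.clm_apply (hcont n)).continuousAt
  have hbound : ∀ n t, ‖I n t‖ ≤ ‖x₀‖ * (l * |t|) ^ n / n.factorial := by
    intro n
    induction n with
    | zero =>
      intro t
      rw [show I 0 t = x₀ from rfl]
      simp
    | succ n ih =>
      intro t
      have : ∀ s, ‖B s (I n s)‖ ≤ (‖x₀‖ * l ^ (n+1) / n.factorial) * |s| ^ n := by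
        intro s
        calc ‖B s (I n s)‖ ≤ ‖B s‖ * ‖I n s‖ := (B s).le_opNorm _
          _ ≤ l * (‖x₀‖ * (l * |s|) ^ n / n.factorial) :=
            mul_le_mul (hBl s) (ih s) (norm_nonneg _) hl
          _ = (‖x₀‖ * l ^ (n+1) / n.factorial) * |s| ^ n := by rw [mul_pow]; ring
      have h := key_int (fun s => B s (I n s)) (‖x₀‖ * l ^ (n+1) / n.factorial) n
        (hB.clm_apply (hcont n)) (by positivity) this t
      rw [hIsucc]
      refine h.trans (le_of_eq ?_)
      rw [mul_pow, Nat.factorial_succ]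
      have hn : (n.factorial : ℝ) ≠ 0 := Nat.cast_ne_zero.2 n.factorial_ne_zero
      push_cast
      field_simp
  have hnormsum : ∀ t, Summable (fun n => ‖I n t‖) := by
    intro t
    apply Summable.of_nonneg_of_le (fun n => norm_nonneg _) (fun n => ?_)
      (((Real.summable_pow_div_factorial (l * |t|)).mul_left ‖x₀‖))
    simpa [mul_div_assoc] using hbound n t
  have hsum : ∀ t, Summable (fun n => I n t) := fun t => (hnormsum t).of_norm
  refine ⟨fun t => ∑' n, I n t, ?_, ?_, ?_⟩
  · show (∑' n, I n 0) = x₀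
    rw [Summable.tsum_eq_zero_add (hsum 0)]
    have : ∀ n:ℕ, I (n+1) 0 = 0 := fun n => by rw [hIsucc, intervalIntegral.integral_same]
    simp [this, hI]
  · intro t₀
    set T := |t₀| + 1 with hT
    have hT0 : 0 < T := by positivity
    have ht₀ : t₀ ∈ Ioo (-T) T :=
      ⟨by nlinarith [neg_abs_le t₀], by nlinarith [le_abs_self t₀]⟩
    set d : ℕ → ℝ → X := fun n t => Nat.casesOn n 0 (fun m => B t (I m t)) with hd
    set u : ℕ → ℝ := fun n => Nat.casesOn n 0 (fun m => l * (‖x₀‖ * ((l * T) ^ m / m.factorial)))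
      with hu
    have hdu : ∀ n t, t ∈ Ioo (-T) T → ‖d n t‖ ≤ u n := by
      rintro (_ | n) t ht
      · simp [hd, hu]
      · calc ‖B t (I n t)‖ ≤ ‖B t‖ * ‖I n t‖ := (B t).le_opNorm _
          _ ≤ l * (‖x₀‖ * ((l * T) ^ n / n.factorial)) := by
            rw [← mul_div_assoc]
            refine mul_le_mul (hBl t) ((hbound n t).trans ?_) (norm_nonneg _) hl
            have : |t| ≤ T := by rw [abs_le]; exact ⟨ht.1.le, ht.2.le⟩
            gcongr
    have husum : Summable u := by
      rw [← summable_nat_add_iff 1]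
      exact ((Real.summable_pow_div_factorial (l * T)).mul_left ‖x₀‖).mul_left l
    have hdsum : ∀ t, t ∈ Ioo (-T) T → Summable (fun n => d n t) := fun t ht =>
      Summable.of_norm_bounded husum (fun n => hdu n t ht)
    have hunif : TendstoUniformlyOn (fun N t => ∑ n ∈ Finset.range N, d n t)
        (fun t => ∑' n, d n t) atTop (Ioo (-T) T) :=
      tendstoUniformlyOn_tsum_nat husum (fun n t ht => hdu n t ht)
    have hgoal := hasDerivAt_of_tendstoUniformlyOn isOpen_Ioo hunif
      (Eventually.of_forall (fun N t _ => HasDerivAt.fun_sum (fun n _ => by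
        cases n with
        | zero => exact hasDerivAt_const t x₀
        | succ m => exact hderiv m t)))
      (fun t ht => ((hsum t).hasSum.tendsto_sum_nat)) ht₀
    show HasDerivAt (fun t => ∑' n, I n t) (B t₀ (∑' n, I n t₀)) t₀
    convert hgoal using 1
    rw [Summable.tsum_eq_zero_add (hdsum t₀ ht₀)]
    simp only [hd]
    rw [(B t₀).map_tsum (hsum t₀)]
    simp
  · intro t
    show ‖∑' n, I n t‖ ≤ _
    calc ‖∑' n, I n t‖ ≤ ∑' n, ‖I n t‖ := norm_tsum_le_tsum_norm (hnormsum t)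
      _ ≤ ∑' n, ‖x₀‖ * (l * |t|) ^ n / n.factorial := by
        apply Summable.tsum_le_tsum (fun n => hbound n t) (hnormsum t)
        simpa [mul_div_assoc] using (Real.summable_pow_div_factorial (l * |t|)).mul_left ‖x₀‖
      _ = ‖x₀‖ * Real.exp (l * |t|) := by
        rw [Real.exp_eq_exp_ℝ, NormedSpace.exp_eq_tsum_div]
        rw [← tsum_mul_left]
        simp [mul_div_assoc]


section helpers
variable {E : Type*} [NormedAddCommGroup E] [NormedSpace ℝ E]

lemma gronwallBound_scale (K e x : ℝ) (c : ℝ) :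
    gronwallBound 0 K (c * e) x = c * gronwallBound 0 K e x := by
  rcases eq_or_ne K 0 with h | h
  · simp [h, gronwallBound_K0]; ring
  · simp [gronwallBound_of_K_ne_0 h]; ring

lemma gronwallBound_nonneg {K x : ℝ} (hK : 0 ≤ K) (hx : 0 ≤ x) :
    0 ≤ gronwallBound 0 K 1 x := by
  rcases eq_or_ne K 0 with h | h
  · simp [h, gronwallBound_K0]; linarith
  · rw [gronwallBound_of_K_ne_0 h]
    have h1 : (1:ℝ) ≤ Real.exp (K * x) := by
      rw [← Real.exp_zero]
      exact Real.exp_le_exp.2 (by positivity)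
    have hK' : 0 < K := lt_of_le_of_ne hK (Ne.symm h)
    have h2 : (0:ℝ) ≤ Real.exp (K*x) - 1 := by linarith
    have := mul_nonneg (div_nonneg zero_le_one hK'.le) h2
    nlinarith [Real.exp_pos (K*x)]

lemma sol_dist_le {F : E → E} {K : NNReal} (hF : LipschitzWith K F)
    {p q : ℝ → E} (hp : ∀ t, HasDerivAt p (F (p t)) t) (hq : ∀ t, HasDerivAt q (F (q t)) t)
    {t : ℝ} (ht : 0 ≤ t) :
    dist (p t) (q t) ≤ dist (p 0) (q 0) * Real.exp (K * t) := by
  have := dist_le_of_trajectories_ODE (v := fun _ x => F x) (fun _ => hF)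
    (fun s _ => (hp s).continuousAt.continuousWithinAt)
    (fun s _ => (hp s).hasDerivWithinAt)
    (fun s _ => (hq s).continuousAt.continuousWithinAt)
    (fun s _ => (hq s).hasDerivWithinAt)
    (le_refl (dist (p 0) (q 0))) t (mem_Icc.2 ⟨ht, le_rfl⟩)
  simpa using this

end helpers

section flowderiv

variable {E : Type*} [NormedAddCommGroup E] [NormedSpace ℝ E] [FiniteDimensional ℝ E]

set_option maxHeartbeats 2000000 in
lemma flow_hasFDerivAt
    {F : E → E} (hF : ContDiff ℝ 1 F) {l : ℝ} (hl : 0 ≤ l)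
    (hFd : ∀ z, ‖fderiv ℝ F z‖ ≤ l)
    {ψ : ℝ → E → E} (hψ0 : ∀ z, ψ 0 z = z)
    (hψd : ∀ t z, HasDerivAt (fun t => ψ t z) (F (ψ t z)) t) :
    ∃ W : E → ℝ → (E →L[ℝ] E),
      (∀ z t, ‖W z t‖ ≤ Real.exp (l * |t|)) ∧
      (∀ z, Continuous (W z)) ∧
      (∀ z t, 0 ≤ t → HasFDerivAt (fun y => ψ t y) (W z t) z) ∧
      (∀ z t, 0 ≤ t → ContinuousAt (fun y => W y t) z) := by
  have hcomplete : CompleteSpace E := FiniteDimensional.complete ℝ E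
  set K : NNReal := ⟨l, hl⟩ with hK
  have hKl : (K : ℝ) = l := rfl
  have hFlip : LipschitzWith K F := by
    apply lipschitzWith_of_nnnorm_fderiv_le (hF.differentiable one_ne_zero)
    intro x
    rw [← NNReal.coe_le_coe, coe_nnnorm, hKl]
    exact hFd x
  -- Lipschitz dependence on initial conditions
  have zlip : ∀ t, 0 ≤ t → ∀ z z', dist (ψ t z) (ψ t z') ≤ dist z z' * Real.exp (l * t) := by
    intro t ht z z'
    have := sol_dist_le hFlip (fun s => hψd s z) (fun s => hψd s z') ht
    rwa [hψ0, hψ0, hKl] at this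
  have hψtc : ∀ z, Continuous (fun t => ψ t z) :=
    fun z => continuous_iff_continuousAt.2 (fun t => (hψd t z).continuousAt)
  set DF := fderiv ℝ F with hDF
  have hDFc : Continuous DF := hF.continuous_fderiv one_ne_zero
  set B : E → ℝ → (E →L[ℝ] E) →L[ℝ] (E →L[ℝ] E) :=
    fun z t => (ContinuousLinearMap.compL ℝ E E E) (DF (ψ t z)) with hB
  have hBc : ∀ z, Continuous (B z) :=
    fun z => (ContinuousLinearMap.compL ℝ E E E).continuous.comp (hDFc.comp (hψtc z))
  have hBl : ∀ z t, ‖B z t‖ ≤ l := by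
    intro z t
    calc ‖B z t‖ ≤ ‖ContinuousLinearMap.compL ℝ E E E‖ * ‖DF (ψ t z)‖ :=
      (ContinuousLinearMap.compL ℝ E E E).le_opNorm _
    _ ≤ 1 * l := mul_le_mul (ContinuousLinearMap.norm_compL_le ℝ E E E) (hFd _)
        (norm_nonneg _) zero_le_one
    _ = l := one_mul l
  have hWex : ∀ z, ∃ W : ℝ → E →L[ℝ] E, W 0 = ContinuousLinearMap.id ℝ E ∧
      (∀ t, HasDerivAt W (B z t (W t)) t) ∧
      ∀ t, ‖W t‖ ≤ ‖ContinuousLinearMap.id ℝ E‖ * Real.exp (l * |t|) :=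
    fun z => linear_ODE_exists (B z) (hBc z) hl (hBl z) _
  choose W hW0 hWd hWb' using hWex
  have hWb : ∀ z t, ‖W z t‖ ≤ Real.exp (l * |t|) := by
    intro z t
    refine (hWb' z t).trans ?_
    have := ContinuousLinearMap.norm_id_le (𝕜 := ℝ) (E := E)
    nlinarith [Real.exp_pos (l * |t|), norm_nonneg (ContinuousLinearMap.id ℝ E)]
  have hWc : ∀ z, Continuous (W z) :=
    fun z => continuous_iff_continuousAt.2 (fun t => (hWd z t).continuousAt)
  -- uniform continuity of DF near trajectories
  have key : ∀ z T, 0 ≤ T → ∀ ε > (0:ℝ), ∃ δ > (0:ℝ),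
      ∀ t ∈ Icc 0 T, ∀ x y : E, dist x (ψ t z) ≤ δ → dist y (ψ t z) ≤ δ →
        ‖DF x - DF y‖ ≤ ε := by
    intro z T hT ε hε
    have hK1 : IsCompact ((fun t => ψ t z) '' Icc 0 T) :=
      (isCompact_Icc).image (hψtc z)
    have hK2 : IsCompact (cthickening 1 ((fun t => ψ t z) '' Icc 0 T)) := hK1.cthickening
    have hUC := hK2.uniformContinuousOn_of_continuous hDFc.continuousOn
    rw [Metric.uniformContinuousOn_iff] at hUC
    obtain ⟨δ₁, hδ₁, hδ⟩ := hUC ε hε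
    refine ⟨min 1 (δ₁ / 3), by positivity, ?_⟩
    intro t ht x y hx hy
    have hmem : ∀ w : E, dist w (ψ t z) ≤ min 1 (δ₁/3) →
        w ∈ cthickening 1 ((fun t => ψ t z) '' Icc 0 T) := by
      intro w hw
      exact mem_cthickening_of_dist_le w (ψ t z) 1 _ ⟨t, ht, rfl⟩
        (hw.trans (min_le_left _ _))
    have hxy : dist x y < δ₁ := by
      have := dist_triangle_right x y (ψ t z)
      have h3 : min 1 (δ₁/3) ≤ δ₁/3 := min_le_right _ _
      nlinarith
    have := hδ x (hmem x hx) y (hmem y hy) hxy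
    rw [dist_eq_norm] at this
    exact this.le
  refine ⟨W, hWb, hWc, ?_, ?_⟩
  · -- differentiability of the flow
    intro z T hT
    rw [hasFDerivAt_iff_isLittleO_nhds_zero, Asymptotics.isLittleO_iff]
    intro ε hε
    set X := gronwallBound 0 l 1 T * Real.exp (l * T) with hX
    have hX0 : 0 ≤ X := mul_nonneg (gronwallBound_nonneg hl hT) (Real.exp_pos _).le
    set ε₀ := ε / (X + 1) with hε₀
    have hε₀pos : 0 < ε₀ := by positivity
    obtain ⟨δ, hδpos, hδ⟩ := key z T hT ε₀ hε₀pos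
    have hδ'pos : 0 < δ * Real.exp (-(l*T)) := by positivity
    filter_upwards [Metric.closedBall_mem_nhds 0 hδ'pos] with h hh
    rw [mem_closedBall, dist_zero_right] at hh
    set z' := z + h with hz'def
    have hz' : dist z' z ≤ δ * Real.exp (-(l*T)) := by
      rw [dist_eq_norm]
      simpa [hz'def] using hh
    -- flow estimate
    have hflow : ∀ s ∈ Icc (0:ℝ) T, dist (ψ s z') (ψ s z) ≤ δ ∧
        dist (ψ s z') (ψ s z) ≤ Real.exp (l * T) * dist z' z := by
      intro s hs
      have h1 := zlip s hs.1 z' z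
      have hexp : Real.exp (l * s) ≤ Real.exp (l * T) :=
        Real.exp_le_exp.2 (by nlinarith [hs.2])
      constructor
      · calc dist (ψ s z') (ψ s z) ≤ dist z' z * Real.exp (l * s) := h1
          _ ≤ (δ * Real.exp (-(l*T))) * Real.exp (l * T) := by
            apply mul_le_mul hz' hexp (Real.exp_pos _).le
            positivity
          _ = δ := by rw [mul_assoc, ← Real.exp_add]; simp
      · calc dist (ψ s z') (ψ s z) ≤ dist z' z * Real.exp (l * s) := h1
          _ ≤ Real.exp (l * T) * dist z' z := by rw [mul_comm]; gcongr
    set u : ℝ → E := fun s => ψ s z' - ψ s z - W z s (z' - z) with hu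
    set u' : ℝ → E := fun s => F (ψ s z') - F (ψ s z) - B z s (W z s) (z' - z) with hu'
    have hud : ∀ s, HasDerivAt u (u' s) s := by
      intro s
      have h3 : HasDerivAt (fun s => W z s (z' - z)) (B z s (W z s) (z' - z)) s := by
        have := (hWd z s).clm_apply (hasDerivAt_const s (z' - z))
        simpa using this
      exact ((hψd s z').sub (hψd s z)).sub h3
    have hbound : ∀ s ∈ Ico (0:ℝ) T, ‖u' s‖ ≤ l * ‖u s‖ + ε₀ * (Real.exp (l*T) * ‖z' - z‖) := by
      intro s hs
      have hsIcc : s ∈ Icc (0:ℝ) T := Ico_subset_Icc_self hs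
      have hrw : u' s = (F (ψ s z') - F (ψ s z) - DF (ψ s z) (ψ s z' - ψ s z))
          + DF (ψ s z) (u s) := by
        simp only [hu', hu, hB, ContinuousLinearMap.compL_apply, ContinuousLinearMap.comp_apply,
          map_sub]
        abel
      have hMVT : ‖F (ψ s z') - F (ψ s z) - DF (ψ s z) (ψ s z' - ψ s z)‖ ≤
          ε₀ * ‖ψ s z' - ψ s z‖ := by
        have hseg : segment ℝ (ψ s z) (ψ s z') ⊆ closedBall (ψ s z) (dist (ψ s z') (ψ s z)) :=
          (convex_closedBall _ _).segment_subset (mem_closedBall_self dist_nonneg)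
            (mem_closedBall.mpr le_rfl)
        have := (convex_segment (ψ s z) (ψ s z')).norm_image_sub_le_of_norm_hasFDerivWithin_le'
          (f := F) (f' := DF) (φ := DF (ψ s z)) (C := ε₀)
          (fun x _ => ((hF.differentiable one_ne_zero x).hasFDerivAt).hasFDerivWithinAt)
          (fun x hx => by
            apply hδ s hsIcc x (ψ s z) _ (by simpa using hδpos.le)
            have := hseg hx
            rw [mem_closedBall] at this
            exact this.trans (hflow s hsIcc).1)
          (left_mem_segment ℝ _ _) (right_mem_segment ℝ _ _)
        simpa using this
      rw [hrw]
      calc ‖_ + DF (ψ s z) (u s)‖ ≤ ε₀ * ‖ψ s z' - ψ s z‖ + ‖DF (ψ s z)‖ * ‖u s‖ := by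
            refine (norm_add_le _ _).trans (add_le_add hMVT ((DF (ψ s z)).le_opNorm _))
        _ ≤ ε₀ * (Real.exp (l*T) * ‖z' - z‖) + l * ‖u s‖ := by
            have h1 : ‖ψ s z' - ψ s z‖ ≤ Real.exp (l*T) * ‖z' - z‖ := by
              rw [← dist_eq_norm, ← dist_eq_norm]
              exact (hflow s hsIcc).2
            exact add_le_add (by nlinarith) (mul_le_mul_of_nonneg_right (hFd _) (norm_nonneg _))
        _ = l * ‖u s‖ + ε₀ * (Real.exp (l*T) * ‖z' - z‖) := by ring
    have hu0 : ‖u 0‖ = 0 := by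
      simp [hu, hψ0, hW0]
    have hG := norm_le_gronwallBound_of_norm_deriv_right_le (a := 0) (b := T)
      (f := u) (f' := u') (δ := 0) (K := l) (ε := ε₀ * (Real.exp (l*T) * ‖z' - z‖))
      (fun s _ => (hud s).continuousAt.continuousWithinAt)
      (fun s _ => (hud s).hasDerivWithinAt)
      (le_of_eq hu0) hbound T (mem_Icc.2 ⟨hT, le_rfl⟩)
    have hfinal : ‖u T‖ ≤ ε * ‖z' - z‖ := by
      rw [sub_zero] at hG
      have hsc : gronwallBound 0 l (ε₀ * (Real.exp (l*T) * ‖z' - z‖)) T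
          = ε₀ * (Real.exp (l*T) * ‖z' - z‖) * gronwallBound 0 l 1 T := by
        have h2 := gronwallBound_scale l (1:ℝ) T (ε₀ * (Real.exp (l*T) * ‖z' - z‖))
        rw [mul_one] at h2
        exact h2
      rw [hsc] at hG
      have heq2 : ε₀ * (Real.exp (l*T) * ‖z' - z‖) * gronwallBound 0 l 1 T
          = (ε₀ * X) * ‖z' - z‖ := by rw [hX]; ring
      rw [heq2] at hG
      refine hG.trans (mul_le_mul_of_nonneg_right ?_ (norm_nonneg _))
      have hXeq : ε₀ * (X + 1) = ε := by
        rw [hε₀]; field_simp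
      nlinarith [hε₀pos.le]
    have hzz : z' - z = h := by rw [hz'def]; abel
    have huT : ψ T (z + h) - ψ T z - W z T h = u T := by rw [hu]; simp [hz'def, hzz]
    rw [huT, ← hzz]
    exact hfinal
  · -- continuity of W in z
    intro z T hT
    rw [Metric.continuousAt_iff]
    intro ε hε
    set X := gronwallBound 0 l 1 T * Real.exp (l * T) with hX
    have hX0 : 0 ≤ X := mul_nonneg (gronwallBound_nonneg hl hT) (Real.exp_pos _).le
    set ε₀ := ε / (X + 1) with hε₀
    have hε₀pos : 0 < ε₀ := by positivity
    obtain ⟨δ, hδpos, hδ⟩ := key z T hT ε₀ hε₀pos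
    refine ⟨δ * Real.exp (-(l*T)), by positivity, ?_⟩
    intro z' hz'
    have hflow : ∀ s ∈ Icc (0:ℝ) T, dist (ψ s z') (ψ s z) ≤ δ := by
      intro s hs
      have h1 := zlip s hs.1 z' z
      have hexp : Real.exp (l * s) ≤ Real.exp (l * T) := Real.exp_le_exp.2 (by nlinarith [hs.2])
      calc dist (ψ s z') (ψ s z) ≤ dist z' z * Real.exp (l * s) := h1
        _ ≤ (δ * Real.exp (-(l*T))) * Real.exp (l * T) := by
          apply mul_le_mul hz'.le hexp (Real.exp_pos _).le (by positivity)
        _ = δ := by rw [mul_assoc, ← Real.exp_add]; simp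
    have hG := dist_le_of_approx_trajectories_ODE (v := fun s M => B z s M) (K := K)
      (εf := ε₀ * Real.exp (l*T)) (εg := 0) (δ := 0) (a := 0) (b := T)
      (f := W z') (f' := fun s => B z' s (W z' s)) (g := W z) (g' := fun s => B z s (W z s))
      (fun s => by
        have : LipschitzWith ‖B z s‖₊ (B z s) := (B z s).lipschitz
        apply this.weaken
        rw [← NNReal.coe_le_coe, coe_nnnorm, hKl]
        exact hBl z s)
      (fun s _ => (hWc z').continuousWithinAt)
      (fun s _ => (hWd z' s).hasDerivWithinAt)
      (fun s hs => by
        rw [dist_eq_norm]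
        have heq : B z' s (W z' s) - B z s (W z' s)
            = (DF (ψ s z') - DF (ψ s z)).comp (W z' s) := by
          simp only [hB, ContinuousLinearMap.compL_apply, ContinuousLinearMap.sub_comp]
        rw [heq]
        have hsI := Ico_subset_Icc_self hs
        calc ‖(DF (ψ s z') - DF (ψ s z)).comp (W z' s)‖
            ≤ ‖DF (ψ s z') - DF (ψ s z)‖ * ‖W z' s‖ :=
              ContinuousLinearMap.opNorm_comp_le _ _
          _ ≤ ε₀ * Real.exp (l * T) := by
              apply mul_le_mul (hδ s hsI _ _ (hflow s hsI) (by simpa using hδpos.le))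
                ((hWb z' s).trans (Real.exp_le_exp.2 (by
                  rw [abs_of_nonneg hs.1]
                  nlinarith [hs.2.le])))
                (norm_nonneg _) hε₀pos.le)
      (fun s _ => (hWc z).continuousWithinAt)
      (fun s _ => (hWd z s).hasDerivWithinAt)
      (fun s _ => by simp)
      (by rw [hW0, hW0]; simp)
      T (mem_Icc.2 ⟨hT, le_rfl⟩)
    refine lt_of_le_of_lt hG ?_
    rw [sub_zero, add_zero, hKl]
    have : ε₀ * Real.exp (l*T) = (ε₀ * Real.exp (l*T)) * 1 := by ring
    rw [this, gronwallBound_scale]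
    calc ε₀ * Real.exp (l * T) * gronwallBound 0 l 1 T = ε₀ * X := by rw [hX]; ring
      _ < ε := by
        rw [hε₀]
        rw [div_mul_eq_mul_div, div_lt_iff₀ (by positivity)]
        nlinarith


end flowderiv


lemma ContinuousAt.clm_comp' {X : Type*} [TopologicalSpace X]
    {E F G : Type*} [NormedAddCommGroup E] [NormedSpace ℝ E] [NormedAddCommGroup F]
    [NormedSpace ℝ F] [NormedAddCommGroup G] [NormedSpace ℝ G]
    {f : X → F →L[ℝ] G} {g : X → E →L[ℝ] F} {x : X}
    (hf : ContinuousAt f x) (hg : ContinuousAt g x) :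
    ContinuousAt (fun y => (f y).comp (g y)) x := by
  have := ((isBoundedBilinearMap_comp (𝕜 := ℝ) (E := E) (F := F) (G := G)).continuous.continuousAt).comp
    (hf.prodMk hg)
  exact this


end aux12

/-- Proposition 4: for `Re λ < -ℓ`, the map
`τ_λ(z) = ∫_{-∞}^0 e^{-λs} g q(φ(s,z)) ds` is well defined (absolutely convergent Bochner
integral) and `C¹` on `ℝⁿ`. -/
theorem statement_12
    (n : ℕ) (f : (Fin n → ℝ) → (Fin n → ℝ)) (l : ℝ)
    (hf : ContDiff ℝ 1 f) (hfb : ∃ C : ℝ, ∀ z, ‖f z‖ ≤ C)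
    (hfd : ∀ z, ‖fderiv ℝ f z‖ ≤ l)
    (φ : ℝ → (Fin n → ℝ) → (Fin n → ℝ))
    (hφ0 : ∀ z, φ 0 z = z)
    (hφ : ∀ s z, HasDerivAt (fun t => φ t z) (f (φ s z)) s)
    (q : (Fin n → ℝ) → ℝ) (hq : ContDiff ℝ 1 q)
    (hqb : ∃ C : ℝ, ∀ z, |q z| ≤ C) (hqd : ∃ C : ℝ, ∀ z, ‖fderiv ℝ q z‖ ≤ C)
    (g : ℝ) (hg : g ≠ 0)
    (lam : ℂ) (hlam : lam.re < -l) :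
    (∀ z, IntegrableOn
      (fun s : ℝ => Complex.exp (-(lam * s)) * ((g : ℂ) * (q (φ s z) : ℂ))) (Iic 0)) ∧
    ContDiff ℝ 1 (fun z =>
      ∫ s in Iic (0:ℝ), Complex.exp (-(lam * s)) * ((g : ℂ) * (q (φ s z) : ℂ))) := by
  classical
  have hl0 : 0 ≤ l := le_trans (norm_nonneg _) (hfd 0)
  obtain ⟨Cq0, hCq0⟩ := hqb
  obtain ⟨Cq1, hCq1⟩ := hqd
  set Cq := max Cq0 0 with hCq
  set Cq' := max Cq1 0 with hCq'
  have hq_bdd : ∀ z, |q z| ≤ Cq := fun z => (hCq0 z).trans (le_max_left _ _)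
  have hq'_bdd : ∀ z, ‖fderiv ℝ q z‖ ≤ Cq' := fun z => (hCq1 z).trans (le_max_left _ _)
  have hCqpos : 0 ≤ Cq := le_max_right _ _
  have hCq'pos : 0 ≤ Cq' := le_max_right _ _
  have hφc : ∀ z, Continuous (fun s => φ s z) := fun z =>
    continuous_iff_continuousAt.2 (fun s => (hφ s z).continuousAt)
  have hlamre : 0 < -lam.re := by linarith
  have hexp_re : ∀ s : ℝ, ‖Complex.exp (-(lam * s))‖ = Real.exp (-lam.re * s) := by
    intro s
    rw [Complex.norm_exp]
    congr 1
    simp [Complex.mul_re]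
  have hce : Continuous fun s : ℝ => Complex.exp (-(lam * s)) :=
    Complex.continuous_exp.comp ((continuous_const.mul Complex.continuous_ofReal).neg)
  have hcont_int : ∀ z, Continuous
      (fun s : ℝ => Complex.exp (-(lam * s)) * ((g : ℂ) * (q (φ s z) : ℂ))) := by
    intro z
    exact hce.mul (continuous_const.mul
      (Complex.continuous_ofReal.comp (hq.continuous.comp (hφc z))))
  have hgq : ∀ (z : Fin n → ℝ) (s : ℝ), ‖Complex.exp (-(lam * s)) * ((g : ℂ) * (q (φ s z) : ℂ))‖
      ≤ (|g| * Cq) * Real.exp (-lam.re * s) := by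
    intro z s
    rw [norm_mul, hexp_re, norm_mul, Complex.norm_real, Complex.norm_real, Real.norm_eq_abs,
      Real.norm_eq_abs]
    rw [mul_comm]
    apply mul_le_mul_of_nonneg_right _ (Real.exp_pos _).le
    exact mul_le_mul_of_nonneg_left (hq_bdd _) (abs_nonneg g)
  have hint : ∀ z, IntegrableOn
      (fun s : ℝ => Complex.exp (-(lam * s)) * ((g : ℂ) * (q (φ s z) : ℂ))) (Iic 0) := by
    intro z
    apply Integrable.mono' (((integrableOn_exp_mul_Iic hlamre 0)).const_mul (|g| * Cq))
    · exact ((hcont_int z).aestronglyMeasurable).restrict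
    · exact Eventually.of_forall (fun s => hgq z s)
  refine ⟨hint, ?_⟩
  -- set up the reversed flow
  set F : (Fin n → ℝ) → (Fin n → ℝ) := fun x => -(f x) with hF
  have hFc : ContDiff ℝ 1 F := hf.neg
  have hFd : ∀ z, ‖fderiv ℝ F z‖ ≤ l := by
    intro z
    rw [hF, fderiv_fun_neg, norm_neg]
    exact hfd z
  set ψ : ℝ → (Fin n → ℝ) → (Fin n → ℝ) := fun t z => φ (-t) z with hψ
  have hψ0 : ∀ z, ψ 0 z = z := by
    intro z
    rw [hψ]
    simp only [neg_zero]
    exact hφ0 z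
  have hψd : ∀ t z, HasDerivAt (fun t => ψ t z) (F (ψ t z)) t := by
    intro t z
    have h1 := hφ (-t) z
    have h2 : HasDerivAt (fun t : ℝ => -t) (-1) t := (hasDerivAt_id t).neg
    have := h1.scomp t h2
    simpa [Function.comp_def] using this
  obtain ⟨W, hWb, hWc, hWD, hWCz⟩ := flow_hasFDerivAt hFc hl0 hFd hψ0 hψd
  have hφderiv : ∀ z s, s ≤ (0:ℝ) → HasFDerivAt (fun y => φ s y) (W z (-s)) z := by
    intro z s hs
    have := hWD z (-s) (by linarith)
    simp only [hψ, neg_neg] at this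
    exact this
  -- the derivative of the integrand
  set F' : (Fin n → ℝ) → ℝ → ((Fin n → ℝ) →L[ℝ] ℂ) := fun z s =>
    (Complex.exp (-(lam * s)) * g) •
      ((Complex.ofRealCLM).comp ((fderiv ℝ q (φ s z)).comp (W z (-s)))) with hF'
  have hdiff : ∀ s : ℝ, s ≤ 0 → ∀ z,
      HasFDerivAt (fun y => Complex.exp (-(lam * s)) * ((g : ℂ) * (q (φ s y) : ℂ)))
        (F' z s) z := by
    intro s hs z
    have h1 := hφderiv z s hs
    have h2 : HasFDerivAt q (fderiv ℝ q (φ s z)) (φ s z) :=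
      (hq.differentiable one_ne_zero (φ s z)).hasFDerivAt
    have h3 := h2.comp z h1
    have h4 := (Complex.ofRealCLM.hasFDerivAt).comp z h3
    have h5 := h4.const_mul (Complex.exp (-(lam * s)) * (g:ℂ))
    simp only [hF']
    simpa [Function.comp_def, Complex.ofRealCLM_apply, mul_assoc] using h5
  have hF'bound : ∀ z s, s ≤ (0:ℝ) →
      ‖F' z s‖ ≤ (|g| * Cq') * Real.exp ((-lam.re - l) * s) := by
    intro z s hs
    simp only [hF']
    refine le_trans (ContinuousLinearMap.opNorm_smul_le _ _) ?_
    have h1 : ‖Complex.exp (-(lam * s)) * (g:ℂ)‖ = Real.exp (-lam.re * s) * |g| := by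
      rw [norm_mul, hexp_re, Complex.norm_real, Real.norm_eq_abs]
    have h2 : ‖(Complex.ofRealCLM).comp ((fderiv ℝ q (φ s z)).comp (W z (-s)))‖
        ≤ Cq' * Real.exp (l * (-s)) := by
      calc ‖(Complex.ofRealCLM).comp ((fderiv ℝ q (φ s z)).comp (W z (-s)))‖
          ≤ ‖(Complex.ofRealCLM : ℝ →L[ℝ] ℂ)‖ * ‖(fderiv ℝ q (φ s z)).comp (W z (-s))‖ :=
            ContinuousLinearMap.opNorm_comp_le _ _
        _ ≤ 1 * (Cq' * Real.exp (l * (-s))) := by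
            apply mul_le_mul
            · apply ContinuousLinearMap.opNorm_le_bound _ zero_le_one
              intro x
              rw [Complex.ofRealCLM_apply, Complex.norm_real, one_mul]
            · calc ‖(fderiv ℝ q (φ s z)).comp (W z (-s))‖
                  ≤ ‖fderiv ℝ q (φ s z)‖ * ‖W z (-s)‖ :=
                    ContinuousLinearMap.opNorm_comp_le _ _
                _ ≤ Cq' * Real.exp (l * (-s)) := by
                    apply mul_le_mul (hq'_bdd _) _ (norm_nonneg _) hCq'pos
                    have := hWb z (-s)
                    rwa [abs_of_nonneg (by linarith : (0:ℝ) ≤ -s)] at this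
            · exact norm_nonneg _
            · exact zero_le_one
        _ = Cq' * Real.exp (l * (-s)) := one_mul _
    rw [h1]
    calc Real.exp (-lam.re * s) * |g| * ‖_‖
        ≤ Real.exp (-lam.re * s) * |g| * (Cq' * Real.exp (l * (-s))) := by
          apply mul_le_mul_of_nonneg_left h2 (by positivity)
      _ = (|g| * Cq') * (Real.exp (-lam.re * s) * Real.exp (l * (-s))) := by ring
      _ = (|g| * Cq') * Real.exp ((-lam.re - l) * s) := by
          rw [← Real.exp_add]
          ring_nf
  have hmu : 0 < -lam.re - l := by linarith
  have hboundint : IntegrableOn (fun s => (|g| * Cq') * Real.exp ((-lam.re - l) * s)) (Iic 0) :=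
    (integrableOn_exp_mul_Iic hmu 0).const_mul _
  have hF'cont_s : ∀ z, Continuous (fun s => F' z s) := by
    intro z
    simp only [hF']
    apply Continuous.smul (hce.mul continuous_const)
    apply Continuous.clm_comp continuous_const
    exact ((hq.continuous_fderiv one_ne_zero).comp (hφc z)).clm_comp ((hWc z).comp continuous_neg)
  have HDF : ∀ z₀, HasFDerivAt
      (fun z => ∫ s in Iic (0:ℝ), Complex.exp (-(lam * s)) * ((g : ℂ) * (q (φ s z) : ℂ)))
      (∫ s in Iic (0:ℝ), F' z₀ s) z₀ := by
    intro z₀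
    apply _root_.hasFDerivAt_integral_of_dominated_of_fderiv_le (s := ball z₀ 1) (ball_mem_nhds z₀ one_pos)
      (bound := fun s => (|g| * Cq') * Real.exp ((-lam.re - l) * s))
    · exact Eventually.of_forall (fun z => ((hcont_int z).aestronglyMeasurable).restrict)
    · exact hint z₀
    · exact ((hF'cont_s z₀).aestronglyMeasurable).restrict
    · filter_upwards [ae_restrict_mem measurableSet_Iic] with s hs
      intro z _
      exact hF'bound z s hs
    · exact hboundint
    · filter_upwards [ae_restrict_mem measurableSet_Iic] with s hs
      intro z _
      exact hdiff s hs z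
  have contG : Continuous (fun z => ∫ s in Iic (0:ℝ), F' z s) := by
    rw [continuous_iff_continuousAt]
    intro z₀
    apply continuousAt_of_dominated (bound := fun s => (|g| * Cq') * Real.exp ((-lam.re - l) * s))
    · exact Eventually.of_forall (fun z => ((hF'cont_s z).aestronglyMeasurable).restrict)
    · apply Eventually.of_forall
      intro z
      filter_upwards [ae_restrict_mem measurableSet_Iic] with s hs
      exact hF'bound z s hs
    · exact hboundint
    · filter_upwards [ae_restrict_mem measurableSet_Iic] with s hs
      rw [mem_Iic] at hs
      simp only [hF']
      apply ContinuousAt.fun_const_smul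
      apply ContinuousAt.clm_comp' continuousAt_const
      apply ContinuousAt.clm_comp'
      · exact ((hq.continuous_fderiv one_ne_zero).continuousAt).comp
          (hφderiv z₀ s hs).continuousAt
      · exact hWCz z₀ (-s) (by linarith)
  rw [contDiff_one_iff_fderiv]
  refine ⟨fun z => (HDF z).differentiableAt, ?_⟩
  have : (fderiv ℝ (fun z =>
      ∫ s in Iic (0:ℝ), Complex.exp (-(lam * s)) * ((g : ℂ) * (q (φ s z) : ℂ))))
      = fun z => ∫ s in Iic (0:ℝ), F' z s := funext (fun z => (HDF z).fderiv)
  rw [this]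
  exact contG
end
end

section
/- Let f : ℝⁿ → ℝⁿ be continuously differentiable with ‖Df(z)‖ ≤ ℓ (operator norm) for all z ∈ ℝⁿ, and let φ : ℝ × ℝⁿ → ℝⁿ be its complete flow. Then for every s ∈ ℝ the map z ↦ φ(s,z) is differentiable and its derivative satisfies ‖∂φ(s,z)/∂z‖ ≤ e^{ℓ|s|} for all z ∈ ℝⁿ. -/
open Set Filter Topology Metric MeasureTheory

noncomputable section

private lemma exp_aux_13 {y : ℝ} (hy : 0 ≤ y) : Real.exp y - 1 ≤ y * Real.exp y := by
  have h1 : 1 - y ≤ Real.exp (-y) := by linarith [Real.add_one_le_exp (-y)]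
  have h2 : Real.exp (-y) * Real.exp y = 1 := by rw [← Real.exp_add]; simp
  nlinarith [Real.exp_pos y]

private lemma gronwallBound_le_13 {K c x M : ℝ} (hK : 0 ≤ K) (hc : 0 ≤ c) (hx : 0 ≤ x)
    (hxM : x ≤ M) : gronwallBound 0 K c x ≤ c * (M * Real.exp (K * M)) := by
  have hM : 0 ≤ M := hx.trans hxM
  rcases eq_or_ne K 0 with h | h
  · subst h
    rw [gronwallBound_K0]
    have he : Real.exp (0 * M) = 1 := by simp
    rw [he]
    simp only [zero_add]
    nlinarith
  · have hK' : 0 < K := lt_of_le_of_ne hK (Ne.symm h)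
    rw [gronwallBound_of_K_ne_0 h]
    have h1 : Real.exp (K * x) ≤ Real.exp (K * M) :=
      Real.exp_le_exp.2 (mul_le_mul_of_nonneg_left hxM hK)
    have h2 : Real.exp (K * M) - 1 ≤ K * M * Real.exp (K * M) := exp_aux_13 (by positivity)
    have h3 : c / K * (Real.exp (K * x) - 1) ≤ c / K * (K * M * Real.exp (K * M)) := by
      apply mul_le_mul_of_nonneg_left _ (by positivity)
      linarith
    have h4 : c / K * (K * M * Real.exp (K * M)) = c * (M * Real.exp (K * M)) := by
      field_simp
    nlinarith

set_option maxHeartbeats 2000000 in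
private theorem flow_aux_13
    (n : ℕ) (f : (Fin n → ℝ) → (Fin n → ℝ)) (l : ℝ)
    (hf : ContDiff ℝ 1 f)
    (hfd : ∀ z, ‖fderiv ℝ f z‖ ≤ l)
    (φ : ℝ → (Fin n → ℝ) → (Fin n → ℝ))
    (hφ0 : ∀ z, φ 0 z = z)
    (hφ : ∀ s z, HasDerivAt (fun t => φ t z) (f (φ s z)) s) :
    ∀ s : ℝ, 0 ≤ s → Differentiable ℝ (φ s) ∧
      ∀ z, ‖fderiv ℝ (φ s) z‖ ≤ Real.exp (l * s) := by
  have hl0 : 0 ≤ l := (norm_nonneg _).trans (hfd 0)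
  have hlipcoe : (l.toNNReal : ℝ) = l := Real.coe_toNNReal _ hl0
  have hlip : LipschitzWith l.toNNReal f := by
    apply lipschitzWith_of_nnnorm_fderiv_le (hf.differentiable one_ne_zero)
    intro z
    rw [Real.le_toNNReal_iff_coe_le hl0]
    exact_mod_cast hfd z
  have hc : ∀ z, Continuous fun t => φ t z := fun z =>
    continuous_iff_continuousAt.2 fun t => (hφ t z).continuousAt
  -- Grönwall estimate on the distance of two trajectories
  have gron : ∀ z₁ z₂ s, 0 ≤ s → dist (φ s z₁) (φ s z₂) ≤ dist z₁ z₂ * Real.exp (l * s) := by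
    intro z₁ z₂ s hs
    have h := dist_le_of_trajectories_ODE (v := fun _ x => f x) (K := l.toNNReal)
      (a := 0) (b := s) (δ := dist z₁ z₂) (fun _ => hlip)
      ((hc z₁).continuousOn) (fun t _ => (hφ t z₁).hasDerivWithinAt)
      ((hc z₂).continuousOn) (fun t _ => (hφ t z₂).hasDerivWithinAt)
      (le_of_eq (by rw [hφ0, hφ0]))
      s (right_mem_Icc.2 hs)
    simpa [hlipcoe] using h
  have hlips : ∀ s, 0 ≤ s → LipschitzWith (Real.exp (l * s)).toNNReal (φ s) := by
    intro s hs
    apply LipschitzWith.of_dist_le_mul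
    intro z₁ z₂
    rw [Real.coe_toNNReal _ (Real.exp_nonneg _), mul_comm]
    exact gron z₁ z₂ s hs
  -- semigroup property
  have hsg : ∀ s t z, 0 ≤ t → φ (s + t) z = φ t (φ s z) := by
    intro s t z ht
    have hd1 : ∀ τ : ℝ, HasDerivAt (fun τ => φ (s + τ) z) (f (φ (s + τ) z)) τ := by
      intro τ
      have h := (hφ (s + τ) z).scomp (x := τ) (h := fun τ : ℝ => s + τ)
        ((hasDerivAt_id τ).const_add s)
      simpa [Function.comp_def] using h
    have key := ODE_solution_unique (v := fun _ x => f x) (K := l.toNNReal) (fun _ => hlip)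
      (f := fun τ => φ (s + τ) z) (g := fun τ => φ τ (φ s z)) (a := 0) (b := t)
      (continuous_iff_continuousAt.2 fun τ => (hd1 τ).continuousAt).continuousOn
      (fun τ _ => (hd1 τ).hasDerivWithinAt)
      ((hc (φ s z)).continuousOn)
      (fun τ _ => (hφ τ (φ s z)).hasDerivWithinAt)
      (by show φ (s + 0) z = φ 0 (φ s z); rw [add_zero, hφ0])
    exact key (right_mem_Icc.2 ht)
  have hfC : Continuous (fderiv ℝ f) := hf.continuous_fderiv one_ne_zero
  have hε0 : (0:ℝ) < 1 / (2 * l + 2) := by positivity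
  set ε : ℝ := 1 / (2 * l + 2) with hεdef
  -- small-time differentiability
  have hsmall : ∀ z, ∀ s ∈ Icc (0:ℝ) ε, DifferentiableAt ℝ (φ s) z := by
    intro z
    set A : ℝ → ((Fin n → ℝ) →L[ℝ] (Fin n → ℝ)) := fun t => fderiv ℝ f (φ t z) with hAdef
    have hA : Continuous A := hfC.comp (hc z)
    have hAn : ∀ t, ‖A t‖ ≤ l := fun t => hfd _
    have hPL : IsPicardLindelof
        (fun t (B : (Fin n → ℝ) →L[ℝ] (Fin n → ℝ)) => (A t).comp B)
        (tmin := 0) (tmax := ε) ⟨0, left_mem_Icc.2 hε0.le⟩ 1 1 0 (2 * l).toNNReal l.toNNReal := by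
      constructor
      · intro t _
        apply LipschitzWith.lipschitzOnWith
        apply LipschitzWith.of_dist_le_mul
        intro B₁ B₂
        rw [dist_eq_norm, dist_eq_norm, ← ContinuousLinearMap.comp_sub, hlipcoe]
        calc ‖(A t).comp (B₁ - B₂)‖ ≤ ‖A t‖ * ‖B₁ - B₂‖ :=
              ContinuousLinearMap.opNorm_comp_le _ _
          _ ≤ l * ‖B₁ - B₂‖ :=
              mul_le_mul_of_nonneg_right (hAn t) (norm_nonneg _)
      · intro B _
        exact (hA.clm_comp continuous_const).continuousOn
      · intro t _ B hB
        have h1 : ‖B‖ ≤ 2 := by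
          have hb1 : ‖B - 1‖ ≤ 1 := by simpa using mem_closedBall_iff_norm.1 hB
          have h2 : ‖(1 : (Fin n → ℝ) →L[ℝ] (Fin n → ℝ))‖ ≤ 1 :=
            ContinuousLinearMap.norm_id_le
          calc ‖B‖ = ‖B - 1 + 1‖ := by rw [sub_add_cancel]
            _ ≤ ‖B - 1‖ + ‖(1 : (Fin n → ℝ) →L[ℝ] (Fin n → ℝ))‖ := norm_add_le _ _
            _ ≤ 1 + 1 := add_le_add hb1 h2
            _ = 2 := by norm_num
        rw [Real.coe_toNNReal _ (by linarith)]
        calc ‖(A t).comp B‖ ≤ ‖A t‖ * ‖B‖ := ContinuousLinearMap.opNorm_comp_le _ _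
          _ ≤ l * 2 := mul_le_mul (hAn t) h1 (norm_nonneg _) hl0
          _ = 2 * l := mul_comm _ _
      · have hmax : max (ε - 0) (0 - 0) = ε := by
          rw [sub_zero, sub_zero]; exact max_eq_left hε0.le
        show ((2 * l).toNNReal : ℝ) * max (ε - 0) (0 - 0) ≤ (1:ℝ) - 0
        rw [hmax, Real.coe_toNNReal _ (by linarith), sub_zero, hεdef]
        have hpos : (0:ℝ) < 2 * l + 2 := by linarith
        rw [mul_one_div, div_le_one hpos]
        linarith
    obtain ⟨W, hW0, hWd⟩ := hPL.exists_eq_forall_mem_Icc_hasDerivWithinAt₀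
    have hW0 : W 0 = 1 := hW0
    have hWc : ContinuousOn W (Icc 0 ε) := fun t ht => (hWd t ht).continuousWithinAt
    intro s hs
    have hs0 := hs.1
    have hsε := hs.2
    suffices hFD : HasFDerivAt (φ s) (W s) z from hFD.differentiableAt
    rw [hasFDerivAt_iff_isLittleO_nhds_zero, Asymptotics.isLittleO_iff]
    intro c hc0
    set C₁ : ℝ := Real.exp (l * ε) with hC₁def
    have hC₁1 : (1:ℝ) ≤ C₁ := Real.one_le_exp (by positivity)
    have hC₁0 : (0:ℝ) < C₁ := zero_lt_one.trans_le hC₁1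
    set C₂ : ℝ := ε * C₁ with hC₂def
    have hC₂0 : (0:ℝ) < C₂ := by positivity
    set δ' : ℝ := c / (C₁ * C₂ + 1) with hδdef
    have hδ0 : 0 < δ' := by positivity
    obtain ⟨ρ, hρ0, hρ⟩ : ∃ ρ > (0:ℝ), ∀ t ∈ Icc (0:ℝ) ε, ∀ y,
        dist y (φ t z) < ρ → ‖fderiv ℝ f y - A t‖ < δ' := by
      set K : Set (ℝ × (Fin n → ℝ)) := (fun t => (t, φ t z)) '' Icc 0 ε with hKdef
      have hK : IsCompact K := isCompact_Icc.image (continuous_id.prodMk (hc z))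
      have hGc : Continuous fun p : ℝ × (Fin n → ℝ) => ‖fderiv ℝ f p.2 - A p.1‖ :=
        ((hfC.comp continuous_snd).sub (hA.comp continuous_fst)).norm
      have hU : IsOpen {p : ℝ × (Fin n → ℝ) | ‖fderiv ℝ f p.2 - A p.1‖ < δ'} :=
        isOpen_lt hGc continuous_const
      have hKU : K ⊆ {p : ℝ × (Fin n → ℝ) | ‖fderiv ℝ f p.2 - A p.1‖ < δ'} := by
        rintro p ⟨t, ht, rfl⟩
        simpa [hAdef] using hδ0
      obtain ⟨ρ, hρ0, hsub⟩ := hK.exists_thickening_subset_open hU hKU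
      refine ⟨ρ, hρ0, fun t ht y hy => ?_⟩
      have hmem : (t, y) ∈ thickening ρ K := by
        rw [mem_thickening_iff]
        refine ⟨(t, φ t z), ⟨t, ht, rfl⟩, ?_⟩
        rw [Prod.dist_eq]
        simp only [dist_self]
        exact max_lt hρ0 hy
      simpa only [Set.mem_setOf_eq] using hsub hmem
    have hrr : (0:ℝ) < ρ / C₁ := by positivity
    filter_upwards [Metric.ball_mem_nhds (0 : Fin n → ℝ) hrr] with h hh
    rw [mem_ball_zero_iff] at hh
    have hhρ : C₁ * ‖h‖ < ρ := by
      rw [mul_comm]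
      exact (lt_div_iff₀ hC₁0).1 hh
    -- trajectory distance bound
    have hgront : ∀ t ∈ Icc (0:ℝ) ε, dist (φ t (z + h)) (φ t z) ≤ C₁ * ‖h‖ := by
      intro t ht
      have h1 := gron (z + h) z t ht.1
      have h2 : dist (z + h) z = ‖h‖ := by simp [dist_eq_norm]
      have h3 : Real.exp (l * t) ≤ C₁ := Real.exp_le_exp.2 (mul_le_mul_of_nonneg_left ht.2 hl0)
      calc dist (φ t (z + h)) (φ t z) ≤ dist (z + h) z * Real.exp (l * t) := h1
        _ ≤ ‖h‖ * C₁ := by rw [h2]; exact mul_le_mul_of_nonneg_left h3 (norm_nonneg h)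
        _ = C₁ * ‖h‖ := mul_comm _ _
    -- bracket bound
    have hbr : ∀ t ∈ Icc (0:ℝ) ε,
        ‖f (φ t (z + h)) - f (φ t z) - A t (φ t (z + h) - φ t z)‖ ≤ δ' * (C₁ * ‖h‖) := by
      intro t ht
      have hmem₁ : φ t z ∈ closedBall (φ t z) (C₁ * ‖h‖) := mem_closedBall_self (by positivity)
      have hmem₂ : φ t (z + h) ∈ closedBall (φ t z) (C₁ * ‖h‖) :=
        Metric.mem_closedBall.2 (hgront t ht)
      have hderiv : ∀ y ∈ closedBall (φ t z) (C₁ * ‖h‖),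
          HasFDerivWithinAt (fun y => f y - A t y) (fderiv ℝ f y - A t)
            (closedBall (φ t z) (C₁ * ‖h‖)) y := fun y _ =>
        ((hf.differentiable one_ne_zero y).hasFDerivAt.sub ((A t).hasFDerivAt)).hasFDerivWithinAt
      have hbound : ∀ y ∈ closedBall (φ t z) (C₁ * ‖h‖), ‖fderiv ℝ f y - A t‖ ≤ δ' := by
        intro y hy
        have hlt : dist y (φ t z) < ρ := lt_of_le_of_lt (Metric.mem_closedBall.1 hy) hhρ
        exact (hρ t ht y hlt).le
      have hm := (convex_closedBall (φ t z)
        (C₁ * ‖h‖)).norm_image_sub_le_of_norm_hasFDerivWithin_le hderiv hbound hmem₁ hmem₂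
      have heq : (f (φ t (z + h)) - A t (φ t (z + h))) - (f (φ t z) - A t (φ t z))
          = f (φ t (z + h)) - f (φ t z) - A t (φ t (z + h) - φ t z) := by
        rw [map_sub]; abel
      rw [heq] at hm
      calc ‖f (φ t (z + h)) - f (φ t z) - A t (φ t (z + h) - φ t z)‖
          ≤ δ' * ‖φ t (z + h) - φ t z‖ := hm
        _ ≤ δ' * (C₁ * ‖h‖) := mul_le_mul_of_nonneg_left
            (by rw [← dist_eq_norm]; exact hgront t ht) hδ0.le
    set g : ℝ → (Fin n → ℝ) := fun t => φ t (z + h) - φ t z - W t h with hgdef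
    have hgc : ContinuousOn g (Icc 0 s) := by
      apply ContinuousOn.sub
      · exact ((hc (z + h)).continuousOn).sub ((hc z).continuousOn)
      · exact (hWc.mono (Icc_subset_Icc le_rfl hsε)).clm_apply continuousOn_const
    have hgd : ∀ t ∈ Ico (0:ℝ) s, HasDerivWithinAt g
        (f (φ t (z + h)) - f (φ t z) - ((A t).comp (W t)) h) (Ici t) t := by
      intro t ht
      have ht' : t ∈ Ico (0:ℝ) ε := ⟨ht.1, lt_of_lt_of_le ht.2 hsε⟩
      have h3 : HasDerivWithinAt W ((A t).comp (W t)) (Ici t) t :=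
        (hWd t (Ico_subset_Icc_self ht')).mono_of_mem_nhdsWithin (Icc_mem_nhdsGE_of_mem ht')
      have h4 : HasDerivWithinAt (fun τ => W τ h) (((A t).comp (W t)) h) (Ici t) t := by
        have := h3.clm_apply (hasDerivWithinAt_const t _ h)
        simpa using this
      exact ((hφ t (z + h)).hasDerivWithinAt.sub (hφ t z).hasDerivWithinAt).sub h4
    have hbound : ∀ t ∈ Ico (0:ℝ) s,
        ‖f (φ t (z + h)) - f (φ t z) - ((A t).comp (W t)) h‖
          ≤ l * ‖g t‖ + δ' * (C₁ * ‖h‖) := by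
      intro t ht
      have ht2 : t ∈ Icc (0:ℝ) ε := ⟨ht.1, ht.2.le.trans hsε⟩
      have heq : f (φ t (z + h)) - f (φ t z) - ((A t).comp (W t)) h
          = (f (φ t (z + h)) - f (φ t z) - A t (φ t (z + h) - φ t z)) + A t (g t) := by
        simp only [hgdef, map_sub, ContinuousLinearMap.comp_apply]
        abel
      rw [heq]
      have hAg : ‖A t (g t)‖ ≤ l * ‖g t‖ :=
        le_trans ((A t).le_opNorm _) (mul_le_mul_of_nonneg_right (hAn t) (norm_nonneg _))
      calc ‖(f (φ t (z + h)) - f (φ t z) - A t (φ t (z + h) - φ t z)) + A t (g t)‖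
          ≤ ‖f (φ t (z + h)) - f (φ t z) - A t (φ t (z + h) - φ t z)‖ + ‖A t (g t)‖ :=
            norm_add_le _ _
        _ ≤ δ' * (C₁ * ‖h‖) + l * ‖g t‖ := add_le_add (hbr t ht2) hAg
        _ = l * ‖g t‖ + δ' * (C₁ * ‖h‖) := add_comm _ _
    have hg0 : ‖g 0‖ ≤ 0 := by
      simp [hgdef, hφ0, hW0]
    have hgb := norm_le_gronwallBound_of_norm_deriv_right_le hgc hgd hg0 hbound s
      (right_mem_Icc.2 hs0)
    rw [sub_zero] at hgb
    have hfinal : gronwallBound 0 l (δ' * (C₁ * ‖h‖)) s ≤ δ' * (C₁ * ‖h‖) * C₂ := by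
      have := gronwallBound_le_13 (c := δ' * (C₁ * ‖h‖)) (M := ε) hl0 (by positivity) hs0 hsε
      rw [hC₂def, hC₁def]
      exact this
    have hkey : δ' * (C₁ * ‖h‖) * C₂ ≤ c * ‖h‖ := by
      have hpos : (0:ℝ) < C₁ * C₂ + 1 := by positivity
      rw [hδdef, div_mul_eq_mul_div, div_mul_eq_mul_div, div_le_iff₀ hpos]
      nlinarith [norm_nonneg h, hc0.le, mul_nonneg hc0.le (norm_nonneg h)]
    have hgs : ‖g s‖ ≤ c * ‖h‖ := le_trans hgb (le_trans hfinal hkey)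
    simpa [hgdef] using hgs
  -- induction to all nonnegative times
  have main : ∀ N : ℕ, ∀ s ∈ Icc (0:ℝ) (N * ε), Differentiable ℝ (φ s) := by
    intro N
    induction N with
    | zero =>
      intro s hs
      simp only [Nat.cast_zero, zero_mul] at hs
      have hs0 : s = 0 := le_antisymm hs.2 hs.1
      subst hs0
      intro z
      exact hsmall z 0 (left_mem_Icc.2 hε0.le)
    | succ N ih =>
      intro s hs
      set t : ℝ := min s ((N : ℝ) * ε) with htdef
      have htmem : t ∈ Icc (0:ℝ) ((N : ℝ) * ε) := ⟨le_min hs.1 (by positivity), min_le_right _ _⟩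
      have hrt : s - t ∈ Icc (0:ℝ) ε := by
        constructor
        · simp only [htdef, sub_nonneg]; exact min_le_left _ _
        · rcases le_total s ((N : ℝ) * ε) with hle | hle
          · rw [htdef, min_eq_left hle]
            simpa using hε0.le
          · rw [htdef, min_eq_right hle]
            have h2 := hs.2
            push_cast at h2
            linarith
      have hφs : φ s = fun z => φ (s - t) (φ t z) := by
        funext z
        have he : t + (s - t) = s := by ring
        have h2 := hsg t (s - t) z hrt.1
        rw [he] at h2
        exact h2
      rw [hφs]
      intro z
      exact DifferentiableAt.comp z (hsmall (φ t z) (s - t) hrt) (ih t htmem z)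
  intro s hs
  obtain ⟨N, hN⟩ := exists_nat_ge (s / ε)
  have hsN : s ≤ N * ε := by
    rw [div_le_iff₀ hε0] at hN
    exact hN
  refine ⟨main N s ⟨hs, hsN⟩, fun z => ?_⟩
  have hb := norm_fderiv_le_of_lipschitz ℝ (hlips s hs) (x₀ := z)
  rwa [Real.coe_toNNReal _ (Real.exp_nonneg _)] at hb

set_option maxHeartbeats 1000000 in
/-- a flow of a globally Lipschitz (bounded-derivative) `C¹` vector field is
differentiable in the initial condition with `‖∂φ(s,z)/∂z‖ ≤ e^{ℓ|s|}`. -/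
theorem statement_13
    (n : ℕ) (f : (Fin n → ℝ) → (Fin n → ℝ)) (l : ℝ)
    (hf : ContDiff ℝ 1 f)
    (hfd : ∀ z, ‖fderiv ℝ f z‖ ≤ l)
    (φ : ℝ → (Fin n → ℝ) → (Fin n → ℝ))
    (hφ0 : ∀ z, φ 0 z = z)
    (hφ : ∀ s z, HasDerivAt (fun t => φ t z) (f (φ s z)) s) :
    ∀ s : ℝ, Differentiable ℝ (φ s) ∧
      ∀ z, ‖fderiv ℝ (φ s) z‖ ≤ Real.exp (l * |s|) := by
  intro s
  rcases le_or_gt 0 s with hs | hs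
  · rw [abs_of_nonneg hs]
    exact flow_aux_13 n f l hf hfd φ hφ0 hφ s hs
  · rw [abs_of_neg hs]
    set ψ : ℝ → (Fin n → ℝ) → (Fin n → ℝ) := fun t z => φ (-t) z with hψdef
    have hψ0 : ∀ z, ψ 0 z = z := by
      intro z; simp [hψdef, hφ0]
    have hψd : ∀ s z, HasDerivAt (fun t => ψ t z) ((fun y => -f y) (ψ s z)) s := by
      intro s z
      have h := (hφ (-s) z).scomp (x := s) (h := fun t : ℝ => -t) (hasDerivAt_neg s)
      simpa [hψdef, Function.comp_def] using h
    have hfd' : ∀ z, ‖fderiv ℝ (fun y => -f y) z‖ ≤ l := by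
      intro z
      rw [fderiv_fun_neg, norm_neg]
      exact hfd z
    have haux := flow_aux_13 n (fun y => -f y) l hf.neg hfd' ψ hψ0 hψd (-s) (by linarith)
    have hψφ : ψ (-s) = φ s := by
      funext z
      rw [hψdef]
      simp [neg_neg]
    rw [hψφ] at haux
    exact haux
end
end

section
/- Let F ∈ ℝ^{m×m} satisfy ‖exp(tF)‖ ≤ c e^{−λt} for all t ≥ 0, for some c ≥ 1 and λ > 0, and let u : ℝ → ℝ^m be continuous and bounded. Then the function x̄(t) = ∫_{−∞}^t exp((t−s)F) u(s) ds is well defined, bounded, differentiable, and satisfies x̄'(t) = F x̄(t) + u(t) for all t ∈ ℝ; moreover it is the unique such function: every differentiable x : ℝ → ℝ^m with sup_{t∈ℝ} |x(t)| < ∞ and x'(t) = F x(t) + u(t) for all t ∈ ℝ coincides with x̄. -/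
open Set Filter Topology Metric MeasureTheory

noncomputable section

section Stmt15helpers
namespace Stmt15
open NormedSpace
attribute [local instance] Matrix.linftyOpNormedRing Matrix.linftyOpNormedAlgebra

abbrev Mat (m : ℕ) := Matrix (Fin m) (Fin m) ℝ

variable {m : ℕ}

/-- `mulVec` as a continuous linear map in the matrix argument. -/
def mulVecL (m : ℕ) : Mat m →L[ℝ] ((Fin m → ℝ) →L[ℝ] (Fin m → ℝ)) :=
  LinearMap.toContinuousLinearMap
  { toFun := fun A => LinearMap.toContinuousLinearMap A.mulVecLin
    map_add' := by intro A B; ext v; simp [Matrix.add_mulVec]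
    map_smul' := by intro r A; ext v; simp [Matrix.smul_mulVec] }

@[simp] lemma mulVecL_apply (A : Mat m) (v : Fin m → ℝ) : mulVecL m A v = A.mulVec v := rfl

lemma hasDerivAt_Phi (F : Mat m) (t : ℝ) :
    HasDerivAt (fun s : ℝ => exp (s • F)) (F * exp (t • F)) t :=
  hasDerivAt_exp_smul_const' F t

lemma Phi_mul (F : Mat m) (a b : ℝ) :
    exp (a • F) * exp (b • F) = exp ((a + b) • F) := by
  rw [add_smul, Matrix.exp_add_of_commute _ _ (((Commute.refl F).smul_left a).smul_right b)]

lemma Phi_cont (F : Mat m) : Continuous (fun s : ℝ => exp (s • F)) :=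
  exp_continuous.comp (continuous_id.smul continuous_const)

@[simp] lemma Phi_zero (F : Mat m) : exp ((0:ℝ) • F) = 1 := by
  rw [zero_smul, exp_zero]

set_option maxHeartbeats 1000000 in
lemma exp_integrableOn_Iic {lam : ℝ} (hlam : 0 < lam) (t : ℝ) :
    IntegrableOn (fun s : ℝ => Real.exp (-lam * (t - s))) (Iic t) := by
  have h0 : IntegrableOn (fun x : ℝ => Real.exp (-lam * x)) (Ioi (-t)) :=
    exp_neg_integrableOn_Ioi (-t) hlam
  have h1 : IntegrableOn (fun x : ℝ => Real.exp (-lam * t) * Real.exp (-lam * x)) (Ici (-t)) :=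
    (integrableOn_Ici_iff_integrableOn_Ioi enorm_ne_top).2 (h0.const_mul _)
  have h2 := (MeasurePreserving.integrableOn_comp_preimage
      (Measure.measurePreserving_neg (volume : Measure ℝ))
      (Homeomorph.neg ℝ).measurableEmbedding).2 h1
  have : (fun x : ℝ => -x) ⁻¹' Ici (-t) = Iic t := by ext x; simp
  rw [this] at h2
  refine h2.congr_fun (fun x _ => ?_) measurableSet_Iic
  simp [Function.comp, ← Real.exp_add]
  ring_nf

lemma exp_integral_Iic {lam : ℝ} (hlam : 0 < lam) (t : ℝ) :
    ∫ s in Iic t, Real.exp (-lam * (t - s)) = lam⁻¹ := by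
  have h0 : ∀ s : ℝ, Real.exp (-lam * (t - s)) =
      (fun x : ℝ => Real.exp (-lam * (t + x))) (-s) := by intro s; simp [sub_eq_add_neg]
  calc ∫ s in Iic t, Real.exp (-lam * (t - s))
      = ∫ s in Iic t, (fun x : ℝ => Real.exp (-lam * (t + x))) (-s) := by
        simp_rw [← h0]
    _ = ∫ x in Ioi (-t), Real.exp (-lam * (t + x)) :=
        integral_comp_neg_Iic t (fun x => Real.exp (-lam * (t + x)))
    _ = ∫ x in Ioi (-t), (fun y : ℝ => Real.exp (-lam * t) * Real.exp (-y)) (lam * x) := by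
        congr 1; ext x; simp [← Real.exp_add]; ring_nf
    _ = lam⁻¹ • ∫ y in Ioi (lam * (-t)), Real.exp (-lam * t) * Real.exp (-y) := by
        rw [integral_comp_mul_left_Ioi (fun y => Real.exp (-lam * t) * Real.exp (-y)) (-t) hlam]
    _ = lam⁻¹ := by
        rw [integral_const_mul, integral_exp_neg_Ioi]
        rw [smul_eq_mul, ← Real.exp_add]
        ring_nf
        simp


section Main

variable {F : Mat m} {c lam C : ℝ} {u : ℝ → Fin m → ℝ}

lemma integrand_cont (hu : Continuous u) (t : ℝ) :
    Continuous (fun s : ℝ => (exp ((t - s) • F)).mulVec (u s)) := by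
  have h1 : Continuous (fun s : ℝ => mulVecL m (exp ((t - s) • F))) :=
    (mulVecL m).continuous.comp ((Phi_cont F).comp (continuous_const.sub continuous_id))
  exact h1.clm_apply hu

lemma key_int (hlam : 0 < lam) (hc : 1 ≤ c)
    (hF : ∀ t : ℝ, 0 ≤ t → ∀ x : Fin m → ℝ,
      ‖(exp (t • F)).mulVec x‖ ≤ c * Real.exp (-lam * t) * ‖x‖)
    (hu : Continuous u) (hub : ∀ t, ‖u t‖ ≤ C) (t : ℝ) :
    IntegrableOn (fun s : ℝ => (exp ((t - s) • F)).mulVec (u s)) (Iic t) := by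
  refine Integrable.mono' ((exp_integrableOn_Iic hlam t).const_mul (c * C))
    (integrand_cont hu t).aestronglyMeasurable ?_
  filter_upwards [ae_restrict_mem measurableSet_Iic] with s hs
  have hts : (0:ℝ) ≤ t - s := sub_nonneg.2 (mem_Iic.1 hs)
  have h1 := hF (t - s) hts (u s)
  have h2 : ‖u s‖ ≤ C := hub s
  have h3 : (0:ℝ) < Real.exp (-lam * (t - s)) := Real.exp_pos _
  have hc0 : (0:ℝ) ≤ c := le_trans zero_le_one hc
  have h4 := mul_le_mul_of_nonneg_left h2 (mul_nonneg hc0 h3.le)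
  calc ‖(exp ((t - s) • F)).mulVec (u s)‖ ≤ c * Real.exp (-lam * (t - s)) * ‖u s‖ := h1
    _ ≤ c * C * Real.exp (-lam * (t - s)) := by nlinarith [h4]

lemma key_bound (hlam : 0 < lam) (hc : 1 ≤ c)
    (hF : ∀ t : ℝ, 0 ≤ t → ∀ x : Fin m → ℝ,
      ‖(exp (t • F)).mulVec x‖ ≤ c * Real.exp (-lam * t) * ‖x‖)
    (hu : Continuous u) (hub : ∀ t, ‖u t‖ ≤ C) (t : ℝ) :
    ‖∫ s in Iic t, (exp ((t - s) • F)).mulVec (u s)‖ ≤ c * C * lam⁻¹ := by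
  have hb : ∀ᵐ s ∂(volume.restrict (Iic t)),
      ‖(exp ((t - s) • F)).mulVec (u s)‖ ≤ c * C * Real.exp (-lam * (t - s)) := by
    filter_upwards [ae_restrict_mem measurableSet_Iic] with s hs
    have hts : (0:ℝ) ≤ t - s := sub_nonneg.2 (mem_Iic.1 hs)
    have h1 := hF (t - s) hts (u s)
    have h2 : ‖u s‖ ≤ C := hub s
    have h3 : (0:ℝ) < Real.exp (-lam * (t - s)) := Real.exp_pos _
    have hc0 : (0:ℝ) ≤ c := le_trans zero_le_one hc
    have h4 := mul_le_mul_of_nonneg_left h2 (mul_nonneg hc0 h3.le)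
    nlinarith [h4]
  calc ‖∫ s in Iic t, (exp ((t - s) • F)).mulVec (u s)‖
      ≤ ∫ s in Iic t, c * C * Real.exp (-lam * (t - s)) :=
        norm_integral_le_of_norm_le ((exp_integrableOn_Iic hlam t).const_mul (c * C)) hb
    _ = c * C * lam⁻¹ := by rw [integral_const_mul, exp_integral_Iic hlam]

lemma key_rep (hlam : 0 < lam) (hc : 1 ≤ c)
    (hF : ∀ t : ℝ, 0 ≤ t → ∀ x : Fin m → ℝ,
      ‖(exp (t • F)).mulVec x‖ ≤ c * Real.exp (-lam * t) * ‖x‖)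
    (hu : Continuous u) (hub : ∀ t, ‖u t‖ ≤ C) (τ t : ℝ) :
    (∫ s in Iic t, (exp ((t - s) • F)).mulVec (u s)) =
      mulVecL m (exp ((t - τ) • F))
        ((∫ s in Iic τ, (exp ((τ - s) • F)).mulVec (u s)) +
          ∫ s in τ..t, (exp ((τ - s) • F)).mulVec (u s)) := by
  set L := mulVecL m (exp ((t - τ) • F)) with hL
  have hfeq : ∀ s : ℝ, (exp ((t - s) • F)).mulVec (u s) =
      L ((exp ((τ - s) • F)).mulVec (u s)) := by
    intro s
    rw [hL, mulVecL_apply, Matrix.mulVec_mulVec, Phi_mul,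
      show t - τ + (τ - s) = t - s by ring]
  have hIτ := key_int hlam hc hF hu hub (C := C) τ
  have hIt := key_int hlam hc hF hu hub (C := C) t
  have hIτt : IntegrableOn (fun s : ℝ => (exp ((t - s) • F)).mulVec (u s)) (Iic τ) := by
    have : IntegrableOn (fun s : ℝ => L ((exp ((τ - s) • F)).mulVec (u s))) (Iic τ) :=
      L.integrable_comp hIτ
    exact this.congr_fun (fun s _ => (hfeq s).symm) measurableSet_Iic
  have hsplit := intervalIntegral.integral_Iic_sub_Iic hIτt hIt
  have h1 : (∫ s in Iic τ, (exp ((t - s) • F)).mulVec (u s)) =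
      L (∫ s in Iic τ, (exp ((τ - s) • F)).mulVec (u s)) := by
    simp_rw [hfeq]; exact L.integral_comp_comm hIτ
  have h2 : (∫ s in τ..t, (exp ((t - s) • F)).mulVec (u s)) =
      L (∫ s in τ..t, (exp ((τ - s) • F)).mulVec (u s)) := by
    simp_rw [hfeq]
    exact L.intervalIntegral_comp_comm ((integrand_cont hu τ).intervalIntegrable _ _)
  have := sub_eq_iff_eq_add.mp hsplit
  rw [this, h1, h2, map_add]; exact add_comm _ _

lemma key_deriv (hlam : 0 < lam) (hc : 1 ≤ c)
    (hF : ∀ t : ℝ, 0 ≤ t → ∀ x : Fin m → ℝ,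
      ‖(exp (t • F)).mulVec x‖ ≤ c * Real.exp (-lam * t) * ‖x‖)
    (hu : Continuous u) (hub : ∀ t, ‖u t‖ ≤ C) (τ : ℝ) :
    HasDerivAt (fun t' => ∫ s in Iic t', (exp ((t' - s) • F)).mulVec (u s))
      (F.mulVec (∫ s in Iic τ, (exp ((τ - s) • F)).mulVec (u s)) + u τ) τ := by
  have hfun : (fun t' => ∫ s in Iic t', (exp ((t' - s) • F)).mulVec (u s)) =
      fun t' => mulVecL m (exp ((t' - τ) • F))
        ((∫ s in Iic τ, (exp ((τ - s) • F)).mulVec (u s)) +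
          ∫ s in τ..t', (exp ((τ - s) • F)).mulVec (u s)) :=
    funext (fun t' => key_rep hlam hc hF hu hub τ t')
  rw [hfun]
  -- derivative of the matrix part
  have hΦ : HasDerivAt (fun t' : ℝ => exp ((t' - τ) • F))
      (F * exp ((τ - τ) • F)) τ := by
    have h2 : HasDerivAt (fun t' : ℝ => t' - τ) 1 τ := (hasDerivAt_id τ).sub_const τ
    have h3 := HasDerivAt.scomp (h := fun t' : ℝ => t' - τ) τ (hasDerivAt_Phi F (τ - τ)) h2
    simp [Function.comp_def] at h3
    simp only [sub_self, zero_smul, NormedSpace.exp_zero, mul_one]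
    exact h3
  have hcderiv : HasDerivAt (fun t' : ℝ => mulVecL m (exp ((t' - τ) • F)))
      (mulVecL m (F * exp ((τ - τ) • F))) τ :=
    (mulVecL m).hasFDerivAt.comp_hasDerivAt τ hΦ
  -- derivative of the vector part
  have hint : IntervalIntegrable (fun s : ℝ => (exp ((τ - s) • F)).mulVec (u s)) volume τ τ :=
    (integrand_cont hu τ).intervalIntegrable _ _
  have hh : HasDerivAt (fun t' : ℝ => ∫ s in τ..t', (exp ((τ - s) • F)).mulVec (u s))
      ((exp ((τ - τ) • F)).mulVec (u τ)) τ :=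
    intervalIntegral.integral_hasDerivAt_right hint
      ((integrand_cont hu τ).stronglyMeasurableAtFilter _ _)
      (integrand_cont hu τ).continuousAt
  have huderiv : HasDerivAt (fun t' : ℝ =>
      (∫ s in Iic τ, (exp ((τ - s) • F)).mulVec (u s)) +
        ∫ s in τ..t', (exp ((τ - s) • F)).mulVec (u s))
      ((exp ((τ - τ) • F)).mulVec (u τ)) τ := hh.const_add _
  have htotal := hcderiv.clm_apply huderiv
  refine htotal.congr_deriv ?_
  simp [sub_self, intervalIntegral.integral_same, Matrix.one_mulVec]


lemma key_unique (hlam : 0 < lam) (hc : 1 ≤ c)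
    (hF : ∀ t : ℝ, 0 ≤ t → ∀ x : Fin m → ℝ,
      ‖(exp (t • F)).mulVec x‖ ≤ c * Real.exp (-lam * t) * ‖x‖)
    (hu : Continuous u) (hub : ∀ t, ‖u t‖ ≤ C)
    (x : ℝ → Fin m → ℝ) (hx : ∀ t : ℝ, HasDerivAt x (F.mulVec (x t) + u t) t)
    {C' : ℝ} (hxb : ∀ t, ‖x t‖ ≤ C') (t : ℝ) :
    x t = ∫ s in Iic t, (exp ((t - s) • F)).mulVec (u s) := by
  set xb : ℝ → Fin m → ℝ := fun t' => ∫ s in Iic t', (exp ((t' - s) • F)).mulVec (u s) with hxb'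
  have hxbD : ∀ τ : ℝ, HasDerivAt xb (F.mulVec (xb τ) + u τ) τ :=
    fun τ => key_deriv hlam hc hF hu hub τ
  set y : ℝ → Fin m → ℝ := fun t' => x t' - xb t' with hy'
  have hyD : ∀ τ : ℝ, HasDerivAt y (F.mulVec (y τ)) τ := by
    intro τ
    have h := (hx τ).sub (hxbD τ)
    have : F.mulVec (x τ) + u τ - (F.mulVec (xb τ) + u τ) = F.mulVec (y τ) := by
      rw [hy']; simp only [Matrix.mulVec_sub]; abel
    rwa [this] at h
  set K : ℝ := C' + c * C * lam⁻¹ with hK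
  have hyK : ∀ t', ‖y t'‖ ≤ K := by
    intro t'
    calc ‖y t'‖ ≤ ‖x t'‖ + ‖xb t'‖ := norm_sub_le _ _
      _ ≤ K := add_le_add (hxb t') (key_bound hlam hc hF hu hub t')
  -- propagation identity
  have hprop : ∀ s : ℝ, y t = (exp ((t - s) • F)).mulVec (y s) := by
    intro s
    set z : ℝ → Fin m → ℝ := fun r => mulVecL m (exp ((t - r) • F)) (y r) with hz'
    have hzD : ∀ r : ℝ, HasDerivAt z 0 r := by
      intro r
      have h2 : HasDerivAt (fun r' : ℝ => t - r') (-1) r := (hasDerivAt_id r).const_sub t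
      have hΦ : HasDerivAt (fun r' : ℝ => exp ((t - r') • F))
          (-(F * exp ((t - r) • F))) r := by
        have h3 := HasDerivAt.scomp (h := fun r' : ℝ => t - r') r
          (hasDerivAt_Phi F (t - r)) h2
        simp [Function.comp_def] at h3
        exact h3
      have hcd : HasDerivAt (fun r' : ℝ => mulVecL m (exp ((t - r') • F)))
          (mulVecL m (-(F * exp ((t - r) • F)))) r :=
        (mulVecL m).hasFDerivAt.comp_hasDerivAt r hΦ
      have htot := hcd.clm_apply (hyD r)
      have hcomm : exp ((t - r) • F) * F = F * exp ((t - r) • F) :=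
        (((Commute.refl F).smul_left (t - r)).exp_left).eq
      have hval : mulVecL m (-(F * exp ((t - r) • F))) (y r) +
          mulVecL m (exp ((t - r) • F)) (F.mulVec (y r)) = 0 := by
        simp only [mulVecL_apply, Matrix.mulVec_mulVec, hcomm, Matrix.neg_mulVec]
        exact neg_add_cancel _
      rwa [hval] at htot
    have hconst : z t = z s :=
      is_const_of_deriv_eq_zero (fun r => (hzD r).differentiableAt)
        (fun r => (hzD r).deriv) t s
    have hzt : z t = y t := by rw [hz']; simp [Matrix.one_mulVec]
    rw [← hzt, hconst]; rfl
  -- limit argument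
  have hbound : ∀ s : ℝ, s ≤ t → ‖y t‖ ≤ c * K * Real.exp (-lam * (t - s)) := by
    intro s hs
    have h1 := hF (t - s) (sub_nonneg.2 hs) (y s)
    have h2 := hyK s
    have h3 : (0:ℝ) < Real.exp (-lam * (t - s)) := Real.exp_pos _
    have hc0 : (0:ℝ) ≤ c := le_trans zero_le_one hc
    have h4 := mul_le_mul_of_nonneg_left h2 (mul_nonneg hc0 h3.le)
    rw [hprop s]
    nlinarith [h4]
  have htend : Tendsto (fun s : ℝ => c * K * Real.exp (-lam * (t - s))) atBot (nhds 0) := by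
    have T0 : Tendsto (fun s : ℝ => lam * s) atBot atBot :=
      Tendsto.const_mul_atBot hlam tendsto_id
    have T1 : Tendsto (fun s : ℝ => -lam * (t - s)) atBot atBot := by
      have := tendsto_atBot_add_const_right atBot (-lam * t) T0
      refine this.congr (fun s => by ring)
    have T2 : Tendsto (fun s : ℝ => Real.exp (-lam * (t - s))) atBot (nhds 0) :=
      Real.tendsto_exp_atBot.comp T1
    have T3 := T2.const_mul (c * K)
    simpa using T3
  have hle : ‖y t‖ ≤ 0 := by
    refine ge_of_tendsto htend ?_
    filter_upwards [Iic_mem_atBot t] with s hs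
    exact hbound s hs
  have : y t = 0 := norm_le_zero_iff.1 hle
  have := sub_eq_zero.1 this
  simpa [hxb'] using this

end Main
end Stmt15

end Stmt15helpers

/-- for an exponentially stable `F` and a bounded continuous input `u`,
`x̄(t) = ∫_{-∞}^t exp((t-s)F) u(s) ds` is the unique bounded global solution of
`ẋ = Fx + u(t)`. -/
theorem statement_15
    (m : ℕ) (F : Matrix (Fin m) (Fin m) ℝ) (c lam : ℝ) (hc : 1 ≤ c) (hlam : 0 < lam)
    (hF : ∀ t : ℝ, 0 ≤ t → ∀ x : Fin m → ℝ,
      ‖(NormedSpace.exp (t • F)).mulVec x‖ ≤ c * Real.exp (-lam * t) * ‖x‖)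
    (u : ℝ → Fin m → ℝ) (hu : Continuous u) (hub : ∃ C : ℝ, ∀ t, ‖u t‖ ≤ C) :
    (∀ t : ℝ, IntegrableOn
      (fun s : ℝ => (NormedSpace.exp ((t - s) • F)).mulVec (u s)) (Iic t)) ∧
    (∃ C : ℝ, ∀ t : ℝ,
      ‖∫ s in Iic t, (NormedSpace.exp ((t - s) • F)).mulVec (u s)‖ ≤ C) ∧
    (∀ t : ℝ, HasDerivAt
      (fun t' => ∫ s in Iic t', (NormedSpace.exp ((t' - s) • F)).mulVec (u s))
      (F.mulVec (∫ s in Iic t, (NormedSpace.exp ((t - s) • F)).mulVec (u s)) + u t) t) ∧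
    (∀ x : ℝ → Fin m → ℝ,
      (∀ t : ℝ, HasDerivAt x (F.mulVec (x t) + u t) t) → (∃ C : ℝ, ∀ t, ‖x t‖ ≤ C) →
      ∀ t : ℝ, x t = ∫ s in Iic t, (NormedSpace.exp ((t - s) • F)).mulVec (u s)) := by
  obtain ⟨C, hub⟩ := hub
  refine ⟨fun t => Stmt15.key_int hlam hc hF hu hub t,
    ⟨c * C * lam⁻¹, fun t => Stmt15.key_bound hlam hc hF hu hub t⟩,
    fun t => Stmt15.key_deriv hlam hc hF hu hub t,
    fun x hx hxb => ?_⟩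
  obtain ⟨C', hxb⟩ := hxb
  exact fun t => Stmt15.key_unique hlam hc hF hu hub x hx hxb t
end
end

section
/- Let g : (−∞, 0] → ℝ be continuous and bounded with g(0) ≠ 0, and let a < 0. Then there exists λ ∈ ℂ with Re λ < a such that ∫_{−∞}^0 e^{−λ s} g(s) ds ≠ 0; equivalently, the function λ ↦ ∫_{−∞}^0 e^{−λ s} g(s) ds (which converges absolutely for Re λ < 0) is not identically zero on the half-plane {λ ∈ ℂ : Re λ < a}. -/
open Set Filter Topology Metric MeasureTheory

noncomputable section

private lemma Iic_comp_mul_left {E : Type*} [NormedAddCommGroup E] [NormedSpace ℝ E]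
    (h : ℝ → E) {R : ℝ} (hR : 0 < R) :
    (∫ s in Iic (0:ℝ), h (R * s)) = R⁻¹ • ∫ u in Iic (0:ℝ), h u := by
  have h1 : (∫ x in Ioi (0:ℝ), h (R * -x)) = ∫ s in Iic (-(0:ℝ)), h (R * s) :=
    integral_comp_neg_Ioi (0:ℝ) (fun s => h (R * s))
  have h2 : (∫ x in Ioi (0:ℝ), h (R * -x)) = R⁻¹ • ∫ y in Ioi ((R:ℝ) * 0), h (-y) := by
    simpa [mul_neg, neg_mul] using integral_comp_mul_left_Ioi (fun y => h (-y)) 0 hR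
  have h3 : (∫ y in Ioi (-(0:ℝ)), h (- y)) = ∫ u in Iic (-(-(0:ℝ))), h u :=
    integral_comp_neg_Ioi (-(0:ℝ)) h
  rw [neg_zero] at h1
  simp only [neg_zero, neg_neg] at h3
  rw [← h1, h2, mul_zero, h3]

/-- for a bounded continuous `g : (-∞,0] → ℝ` with `g(0) ≠ 0` and `a < 0`, the
Laplace-type transform `λ ↦ ∫_{-∞}^0 e^{-λs} g(s) ds` is not identically zero on the
half-plane `Re λ < a`. -/
theorem statement_16
    (g : ℝ → ℝ) (hg : ContinuousOn g (Iic 0))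
    (hgb : ∃ C : ℝ, ∀ s ≤ (0:ℝ), |g s| ≤ C)
    (hg0 : g 0 ≠ 0) (a : ℝ) (ha : a < 0) :
    ∃ lam : ℂ, lam.re < a ∧
      (∫ s in Iic (0:ℝ), Complex.exp (-(lam * s)) * (g s : ℂ)) ≠ 0 := by
  obtain ⟨C, hC⟩ := hgb
  set A : ℝ → ℝ := fun R => ∫ u in Iic (0:ℝ), Real.exp u * g (u / R) with hA_def
  have hA : Tendsto A atTop (nhds (g 0)) := by
    have key : Tendsto A atTop (nhds (∫ u in Iic (0:ℝ), Real.exp u * g 0)) := by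
      apply MeasureTheory.tendsto_integral_filter_of_dominated_convergence
        (fun u => Real.exp u * C)
      · filter_upwards [eventually_gt_atTop (0:ℝ)] with R hR
        apply ContinuousOn.aestronglyMeasurable _ measurableSet_Iic
        apply Real.continuous_exp.continuousOn.mul
        apply hg.comp (continuous_id.div_const R).continuousOn
        intro u hu
        exact div_nonpos_of_nonpos_of_nonneg hu hR.le
      · filter_upwards [eventually_gt_atTop (0:ℝ)] with R hR
        rw [ae_restrict_iff' measurableSet_Iic]
        filter_upwards with u hu
        rw [Real.norm_eq_abs, abs_mul, abs_of_nonneg (Real.exp_pos u).le]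
        exact mul_le_mul_of_nonneg_left
          (hC _ (div_nonpos_of_nonpos_of_nonneg hu hR.le)) (Real.exp_pos u).le
      · exact (integrableOn_exp_Iic 0).mul_const C
      · rw [ae_restrict_iff' measurableSet_Iic]
        filter_upwards with u hu
        rcases eq_or_lt_of_le (mem_Iic.mp hu) with h0 | h0
        · simp [h0]
        · apply Tendsto.const_mul
          have h2 : Tendsto (fun R : ℝ => u / R) atTop (nhdsWithin 0 (Iic 0)) := by
            rw [tendsto_nhdsWithin_iff]
            constructor
            · simpa [div_eq_mul_inv] using tendsto_inv_atTop_zero.const_mul u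
            · filter_upwards [eventually_gt_atTop (0:ℝ)] with R hR
              exact mem_Iic.mpr (div_nonpos_of_nonpos_of_nonneg h0.le hR.le)
          exact (hg 0 (mem_Iic.mpr le_rfl)).tendsto.comp h2
    have : (∫ u in Iic (0:ℝ), Real.exp u * g 0) = g 0 := by
      rw [MeasureTheory.integral_mul_const, integral_exp_Iic_zero, one_mul]
    rwa [this] at key
  obtain ⟨R, hRne, hRa⟩ := ((hA.eventually_ne hg0).and
    (eventually_gt_atTop (max 0 (-a)))).exists
  have hR0 : (0:ℝ) < R := lt_of_le_of_lt (le_max_left _ _) hRa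
  refine ⟨((-R : ℝ) : ℂ), ?_, ?_⟩
  · simp only [Complex.ofReal_re]
    have := lt_of_le_of_lt (le_max_right 0 (-a)) hRa
    linarith
  · have hconv : (∫ s in Iic (0:ℝ), Complex.exp (-(((-R : ℝ) : ℂ) * s)) * (g s : ℂ))
        = ((∫ s in Iic (0:ℝ), Real.exp (R * s) * g s : ℝ) : ℂ) := by
      rw [show (((∫ s in Iic (0:ℝ), Real.exp (R * s) * g s : ℝ)) : ℂ)
          = ∫ s in Iic (0:ℝ), ((Real.exp (R * s) * g s : ℝ) : ℂ) from integral_ofReal.symm]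
      apply setIntegral_congr_fun measurableSet_Iic
      intro s _
      have he : -(((-R : ℝ):ℂ) * s) = ((R * s : ℝ) : ℂ) := by push_cast; ring
      show Complex.exp (-(((-R : ℝ):ℂ) * s)) * (g s : ℂ) = ((Real.exp (R * s) * g s : ℝ) : ℂ)
      rw [he]; push_cast [Complex.ofReal_exp]; ring
    have hval : (∫ s in Iic (0:ℝ), Real.exp (R * s) * g s) = R⁻¹ * A R := by
      have := Iic_comp_mul_left (fun u => Real.exp u * g (u / R)) hR0
      simp only [smul_eq_mul] at this
      rw [← this]
      apply setIntegral_congr_fun measurableSet_Iic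
      intro s _
      simp [mul_div_cancel_left₀ _ hR0.ne']
    rw [hconv, hval]
    simp only [ne_eq, Complex.ofReal_eq_zero, mul_eq_zero, inv_eq_zero, not_or]
    exact ⟨hR0.ne', hRne⟩
end
end

section
/- Let A ⊂ ℝⁿ be compact and let τ : ℝⁿ → ℝ^m and q : ℝⁿ → ℝ be continuous maps such that for all z₁, z₂ ∈ A, τ(z₁) = τ(z₂) implies q(z₁) = q(z₂). Then there exists a class-K function ρ such that |q(z₁) − q(z₂)| ≤ ρ(‖τ(z₁) − τ(z₂)‖) for all z₁, z₂ ∈ A. -/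
open Set Filter Topology Metric MeasureTheory

noncomputable section

lemma exists_classK_majorant (g : ℝ → ℝ) (hmono : Monotone g)
    (hzero : ∀ s ≤ (0:ℝ), g s = 0)
    (hsmall : ∀ ε > (0:ℝ), ∃ δ > (0:ℝ), ∀ s ≤ δ, g s ≤ ε) :
    ∃ ρ : ℝ → ℝ, IsClassK ρ ∧ ∀ s, 0 ≤ s → g s ≤ ρ s := by
  have hg0 : g 0 = 0 := hzero 0 le_rfl
  have hnn : ∀ s, 0 ≤ g s := by
    intro s
    rcases le_or_gt s 0 with h | h
    · rw [hzero s h]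
    · rw [← hg0]; exact hmono h.le
  have hint : ∀ s a b : ℝ, IntervalIntegrable (fun v => g (s * v)) volume a b := by
    intro s a b
    rcases le_or_gt 0 s with hs | hs
    · exact (hmono.comp (fun x y h => mul_le_mul_of_nonneg_left h hs : Monotone fun v : ℝ => s * v)).intervalIntegrable
    · exact ((hmono.comp_antitone (fun x y h => mul_le_mul_of_nonpos_left h hs.le : Antitone fun v : ℝ => s * v))).intervalIntegrable
  set ρ : ℝ → ℝ := fun s => s + ∫ v in (1:ℝ)..2, g (s * v) with hρ
  have key_mono : ∀ s s' : ℝ, 0 ≤ s → s ≤ s' →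
      (∫ v in (1:ℝ)..2, g (s * v)) ≤ ∫ v in (1:ℝ)..2, g (s' * v) := by
    intro s s' hs hss
    refine intervalIntegral.integral_mono_on (by norm_num) (hint s 1 2) (hint s' 1 2) ?_
    intro v hv
    exact hmono (by nlinarith [hv.1])
  have hρ0 : ρ 0 = 0 := by simp [hρ, hg0]
  have hmaj : ∀ s, 0 ≤ s → g s ≤ ρ s := by
    intro s hs
    have h1 : (∫ v in (1:ℝ)..2, g s) ≤ ∫ v in (1:ℝ)..2, g (s * v) := by
      refine intervalIntegral.integral_mono_on (by norm_num) intervalIntegrable_const (hint s 1 2) ?_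
      intro v hv
      exact hmono (by nlinarith [hv.1])
    simp only [intervalIntegral.integral_const, smul_eq_mul] at h1
    have : g s ≤ ∫ v in (1:ℝ)..2, g (s * v) := by linarith
    simpa [hρ] using le_add_of_nonneg_of_le hs this
  have hub : ∀ s, 0 ≤ s → ρ s ≤ s + g (2 * s) := by
    intro s hs
    have h1 : (∫ v in (1:ℝ)..2, g (s * v)) ≤ ∫ v in (1:ℝ)..2, g (2 * s) := by
      refine intervalIntegral.integral_mono_on (by norm_num) (hint s 1 2) intervalIntegrable_const ?_
      intro v hv
      exact hmono (by nlinarith [hv.2])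
    simp only [intervalIntegral.integral_const, smul_eq_mul] at h1
    simp only [hρ]
    linarith
  have hsm : StrictMonoOn ρ (Ici 0) := by
    intro s hs s' hs' h
    have := key_mono s s' hs h.le
    simp only [hρ]
    linarith
  -- continuity
  have hgint : ∀ a b : ℝ, IntervalIntegrable g volume a b := fun a b => hmono.intervalIntegrable
  set F : ℝ → ℝ := fun x => ∫ t in (0:ℝ)..x, g t with hF
  have hFc : Continuous F := intervalIntegral.continuous_primitive hgint 0
  have hρeq : ∀ s : ℝ, s ≠ 0 → ρ s = s + s⁻¹ * (F (2 * s) - F s) := by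
    intro s hs
    have h1 : (∫ v in (1:ℝ)..2, g (s * v)) = s⁻¹ • ∫ u in (s * 1)..(s * 2), g u :=
      intervalIntegral.integral_comp_mul_left g hs
    have h2 : (∫ u in s..(2 * s), g u) = F (2 * s) - F s :=
      (intervalIntegral.integral_interval_sub_left (hgint 0 (2*s)) (hgint 0 s)).symm
    show s + (∫ v in (1:ℝ)..2, g (s * v)) = s + s⁻¹ * (F (2 * s) - F s)
    rw [h1, smul_eq_mul, mul_one, show s * 2 = 2 * s by ring, h2]
  have hcont : ContinuousOn ρ (Ici 0) := by
    intro s hs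
    rcases eq_or_lt_of_le (Set.mem_Ici.mp hs) with h | h
    · -- continuity at 0
      subst h
      rw [ContinuousWithinAt, hρ0]
      have htg : Tendsto (fun s => g (2 * s)) (nhdsWithin 0 (Ici 0)) (nhds 0) := by
        rw [Metric.tendsto_nhdsWithin_nhds]
        intro ε hε
        obtain ⟨δ, hδ, hδ'⟩ := hsmall (ε/2) (by linarith)
        refine ⟨δ/2, by linarith, ?_⟩
        intro x hx hd
        rw [Real.dist_eq] at hd ⊢
        have hx0 : 0 ≤ x := hx
        rw [sub_zero, abs_of_nonneg hx0] at hd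
        have : g (2 * x) ≤ ε/2 := hδ' _ (by linarith)
        have h0 : 0 ≤ g (2 * x) := hnn _
        rw [sub_zero, abs_of_nonneg h0]; linarith
      have hmain : Tendsto (fun s => s + g (2 * s)) (nhdsWithin 0 (Ici 0)) (nhds 0) := by
        have := (tendsto_id.mono_left nhdsWithin_le_nhds).add htg
        simpa using this
      refine squeeze_zero' ?_ ?_ hmain
      · filter_upwards [self_mem_nhdsWithin] with x hx
        exact le_trans (hnn x) (hmaj x hx)
      · filter_upwards [self_mem_nhdsWithin] with x hx
        exact hub x hx
    · -- continuity at s > 0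
      have hcand : ContinuousAt (fun s => s + s⁻¹ * (F (2 * s) - F s)) s := by
        have : ContinuousAt (fun s : ℝ => s⁻¹) s := continuousAt_inv₀ (ne_of_gt h)
        fun_prop (disch := exact ne_of_gt h)
      have heq : (fun x => x + x⁻¹ * (F (2 * x) - F x)) =ᶠ[nhds s] ρ := by
        filter_upwards [eventually_ne_nhds (ne_of_gt h)] with x hx
        exact (hρeq x hx).symm
      exact (hcand.congr heq).continuousWithinAt
  exact ⟨ρ, ⟨hcont, hsm, hρ0⟩, hmaj⟩

/-- on a compact set `A`, the implication `τ(z₁) = τ(z₂) ⇒ q(z₁) = q(z₂)` can be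
upgraded to a class-`K` modulus: `|q(z₁) − q(z₂)| ≤ ρ(‖τ(z₁) − τ(z₂)‖)` on `A`. -/
theorem statement_17
    (n m : ℕ) (A : Set (Fin n → ℝ)) (hA : IsCompact A)
    (τ : (Fin n → ℝ) → (Fin m → ℝ)) (q : (Fin n → ℝ) → ℝ)
    (hτ : Continuous τ) (hq : Continuous q)
    (hinj : ∀ z₁ ∈ A, ∀ z₂ ∈ A, τ z₁ = τ z₂ → q z₁ = q z₂) :
    ∃ ρ : ℝ → ℝ, IsClassK ρ ∧
      ∀ z₁ ∈ A, ∀ z₂ ∈ A, |q z₁ - q z₂| ≤ ρ ‖τ z₁ - τ z₂‖ := by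
  -- the candidate modulus
  set S : ℝ → Set ℝ := fun s =>
    (fun p : (Fin n → ℝ) × (Fin n → ℝ) => |q p.1 - q p.2|) ''
      {p | p.1 ∈ A ∧ p.2 ∈ A ∧ ‖τ p.1 - τ p.2‖ ≤ s} with hS
  set g : ℝ → ℝ := fun s => sSup (S s) with hg
  -- boundedness
  obtain ⟨C, hC⟩ : ∃ C, ∀ x ∈ A, ‖q x‖ ≤ C := hA.exists_bound_of_continuousOn hq.continuousOn
  have hbdd : ∀ s, BddAbove (S s) := by
    intro s
    refine ⟨2 * C, ?_⟩
    rintro x ⟨p, ⟨h1, h2, _⟩, rfl⟩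
    have := hC p.1 h1
    have := hC p.2 h2
    rw [Real.norm_eq_abs] at *
    calc |q p.1 - q p.2| ≤ |q p.1| + |q p.2| := abs_sub _ _
    _ ≤ 2 * C := by linarith
  have hnn : ∀ s, 0 ≤ g s := fun s => Real.sSup_nonneg (by rintro x ⟨p, _, rfl⟩; positivity)
  have hmono : Monotone g := by
    intro s s' hss
    refine Real.sSup_le (fun x hx => ?_) (hnn s')
    refine le_csSup (hbdd s') ?_
    obtain ⟨p, ⟨h1, h2, h3⟩, rfl⟩ := hx
    exact ⟨p, ⟨h1, h2, h3.trans hss⟩, rfl⟩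
  have hzero : ∀ s ≤ (0:ℝ), g s = 0 := by
    intro s hs
    refine le_antisymm (Real.sSup_le ?_ le_rfl) (hnn s)
    rintro x ⟨p, ⟨h1, h2, h3⟩, rfl⟩
    have : ‖τ p.1 - τ p.2‖ ≤ 0 := h3.trans hs
    have hτeq : τ p.1 = τ p.2 := by
      rwa [← sub_eq_zero, ← norm_le_zero_iff]
    show |q p.1 - q p.2| ≤ 0
    rw [hinj _ h1 _ h2 hτeq, sub_self, abs_zero]
  -- the ε-δ compactness lemma
  have hsmall : ∀ ε > (0:ℝ), ∃ δ > (0:ℝ), ∀ s ≤ δ, g s ≤ ε := by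
    intro ε hε
    set K : Set ((Fin n → ℝ) × (Fin n → ℝ)) :=
      {p | (p.1 ∈ A ∧ p.2 ∈ A) ∧ ε ≤ |q p.1 - q p.2|} with hK
    have hKc : IsCompact K := by
      have : K = (A ×ˢ A) ∩ {p | ε ≤ |q p.1 - q p.2|} := by
        ext p; simp [hK, Set.mem_prod, and_assoc]
      rw [this]
      refine (hA.prod hA).inter_right (isClosed_le continuous_const ?_)
      exact ((hq.comp continuous_fst).sub (hq.comp continuous_snd)).abs
    by_cases hKe : K = ∅
    · refine ⟨1, one_pos, fun s hs => ?_⟩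
      refine Real.sSup_le ?_ hε.le
      rintro x ⟨p, ⟨h1, h2, _⟩, rfl⟩
      by_contra hcon
      push_neg at hcon
      exact absurd (show p ∈ K from ⟨⟨h1, h2⟩, hcon.le⟩) (by simp [hKe])
    · have hKne : K.Nonempty := Set.nonempty_iff_ne_empty.mpr hKe
      have hcont2 : Continuous (fun p : (Fin n → ℝ) × (Fin n → ℝ) => ‖τ p.1 - τ p.2‖) := by
        fun_prop
      obtain ⟨p₀, hp₀K, hp₀min⟩ := hKc.exists_isMinOn (f := fun p => ‖τ p.1 - τ p.2‖) hKne hcont2.continuousOn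
      have hpos : 0 < ‖τ p₀.1 - τ p₀.2‖ := by
        rcases eq_or_lt_of_le (norm_nonneg (τ p₀.1 - τ p₀.2)) with h | h
        · exfalso
          have hτeq : τ p₀.1 = τ p₀.2 := by
            rw [← sub_eq_zero, ← norm_le_zero_iff]; rw [← h]
          have hqe := hinj _ hp₀K.1.1 _ hp₀K.1.2 hτeq
          have h2 := hp₀K.2
          rw [hqe, sub_self, abs_zero] at h2
          linarith
        · exact h
      refine ⟨‖τ p₀.1 - τ p₀.2‖ / 2, by positivity, fun s hs => ?_⟩
      refine Real.sSup_le ?_ hε.le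
      rintro x ⟨p, ⟨h1, h2, h3⟩, rfl⟩
      by_contra hcon
      push_neg at hcon
      have hpK : p ∈ K := ⟨⟨h1, h2⟩, hcon.le⟩
      have hm := hp₀min hpK
      simp only [Set.mem_setOf_eq, Function.comp] at hm
      have := h3.trans hs
      linarith
  obtain ⟨ρ, hρK, hρmaj⟩ := exists_classK_majorant g hmono hzero hsmall
  refine ⟨ρ, hρK, fun z₁ h₁ z₂ h₂ => ?_⟩
  have hmem : |q z₁ - q z₂| ∈ S ‖τ z₁ - τ z₂‖ := ⟨(z₁, z₂), ⟨h₁, h₂, le_rfl⟩, rfl⟩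
  exact (le_csSup (hbdd _) hmem).trans (hρmaj _ (norm_nonneg _))
end
end

section
/- Let A ⊂ ℝⁿ be compact and let τ : ℝⁿ → ℝ^m and q : ℝⁿ → ℝ be continuous maps such that for all z₁, z₂ ∈ A, τ(z₁) = τ(z₂) implies q(z₁) = q(z₂). Then there exists a continuous map γ : ℝ^m → ℝ such that q(z) + γ(τ(z)) = 0 for all z ∈ A. -/
open Set Filter Topology Metric MeasureTheory

noncomputable section

/-- if on the compact set `A` the map `τ` determines `q` (i.e.
`τ(z₁) = τ(z₂) ⇒ q(z₁) = q(z₂)`), then there is a continuous `γ : ℝᵐ → ℝ` with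
`q(z) + γ(τ(z)) = 0` on `A`. -/
theorem statement_19
    (n m : ℕ) (A : Set (Fin n → ℝ)) (hA : IsCompact A)
    (τ : (Fin n → ℝ) → (Fin m → ℝ)) (q : (Fin n → ℝ) → ℝ)
    (hτ : Continuous τ) (hq : Continuous q)
    (hinj : ∀ z₁ ∈ A, ∀ z₂ ∈ A, τ z₁ = τ z₂ → q z₁ = q z₂) :
    ∃ γ : (Fin m → ℝ) → ℝ, Continuous γ ∧ ∀ z ∈ A, q z + γ (τ z) = 0 := by
  classical
  set K : Set (Fin m → ℝ) := τ '' A with hK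
  haveI : CompactSpace A := isCompact_iff_compactSpace.mp hA
  let τ' : A → K := fun z => ⟨τ z, ⟨z, z.2, rfl⟩⟩
  have hτ'c : Continuous τ' := Continuous.subtype_mk (hτ.comp continuous_subtype_val) _
  have hτ's : Function.Surjective τ' := by
    rintro ⟨y, z, hz, rfl⟩
    exact ⟨⟨z, hz⟩, rfl⟩
  have hquot := IsQuotientMap.of_surjective_continuous hτ's hτ'c
  have hsel : ∀ y : K, ∃ z ∈ A, τ z = (y : Fin m → ℝ) := fun y => by
    obtain ⟨z, hz, hzy⟩ := y.2; exact ⟨z, hz, hzy⟩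
  choose sel hselA hselτ using hsel
  let g : K → ℝ := fun y => -q (sel y)
  have hgτ : ∀ z : A, g (τ' z) = -q z := by
    intro z
    have := hinj (sel (τ' z)) (hselA _) z z.2 (by rw [hselτ])
    simp [g, this]
  have hgc : Continuous g := by
    rw [hquot.continuous_iff]
    have : (g ∘ τ') = fun z : A => -q z := funext hgτ
    rw [this]
    exact (hq.comp continuous_subtype_val).neg
  have hKcl : IsClosed K := (hA.image hτ).isClosed
  obtain ⟨G, hG⟩ := ContinuousMap.exists_restrict_eq (Y := ℝ) hKcl ⟨g, hgc⟩
  refine ⟨G, G.continuous, fun z hz => ?_⟩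
  have : G (τ z) = g (τ' ⟨z, hz⟩) := congrFun (congrArg DFunLike.coe hG) (τ' ⟨z, hz⟩)
  rw [this, hgτ ⟨z, hz⟩]; ring
end
end
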